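/- arXiv:1512.05732 — 11 statements merged into one kernel-verified Lean document; each statement's English description precedes it below -/
import Mathlib

section
/- Fix g_rs, g_ds, g_dr > 0 and P_s, P_r > 0. For every power allocation (α_s, β_s, k_s, β_r) with α_s + β_s < P_s, the allocation (α_s, β_s', k_s, β_r) with β_s' = P_s − α_s is still a power allocation and satisfies min(J1', J2') > min(J1, J2), where J1', J2' are the rates of the new allocation. Consequently any rate-maximizing power allocation must use full source power, α_s + β_s = P_s. -/
/-- `J1 = log₂(1 + g_rs² β_s)`: the rate constraint from decoding at the relay. -/
noncomputable def J1 (g_rs βs : ℝ) : ℝ := Real.logb 2 (1 + g_rs ^ 2 * βs)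

/-- `J2`: the rate constraint from decoding at the destination. -/
noncomputable def J2 (g_ds g_dr αs βs ks βr : ℝ) : ℝ :=
  Real.logb 2 (1 + g_ds ^ 2 * (αs + βs) + g_dr ^ 2 * (ks * αs + βr)
    + 2 * g_ds * g_dr * Real.sqrt ks * αs)

/-- A power allocation `(α_s, β_s, k_s, β_r)`: nonnegative reals satisfying the
source power constraint `α_s + β_s ≤ P_s` and relay power constraint `k_s α_s + β_r ≤ P_r`. -/
def IsAlloc (Ps Pr αs βs ks βr : ℝ) : Prop :=
  0 ≤ αs ∧ 0 ≤ βs ∧ 0 ≤ ks ∧ 0 ≤ βr ∧ αs + βs ≤ Ps ∧ ks * αs + βr ≤ Pr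

/-- any allocation not using full source power is strictly improved by
increasing `β_s` to `P_s - α_s`; consequently a rate-maximizing allocation uses full
source power. -/
theorem source_uses_full_power (g_rs g_ds g_dr Ps Pr : ℝ)
    (hgrs : 0 < g_rs) (hgds : 0 < g_ds) (hgdr : 0 < g_dr)
    (hPs : 0 < Ps) (hPr : 0 < Pr) :
    (∀ αs βs ks βr : ℝ, IsAlloc Ps Pr αs βs ks βr → αs + βs < Ps →
      IsAlloc Ps Pr αs (Ps - αs) ks βr ∧
      min (J1 g_rs (Ps - αs)) (J2 g_ds g_dr αs (Ps - αs) ks βr) >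
        min (J1 g_rs βs) (J2 g_ds g_dr αs βs ks βr)) ∧
    (∀ αs βs ks βr : ℝ, IsAlloc Ps Pr αs βs ks βr →
      (∀ αs' βs' ks' βr' : ℝ, IsAlloc Ps Pr αs' βs' ks' βr' →
        min (J1 g_rs βs') (J2 g_ds g_dr αs' βs' ks' βr') ≤
          min (J1 g_rs βs) (J2 g_ds g_dr αs βs ks βr)) →
      αs + βs = Ps) := by
  have key : ∀ αs βs ks βr : ℝ, IsAlloc Ps Pr αs βs ks βr → αs + βs < Ps →
      IsAlloc Ps Pr αs (Ps - αs) ks βr ∧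
      min (J1 g_rs (Ps - αs)) (J2 g_ds g_dr αs (Ps - αs) ks βr) >
        min (J1 g_rs βs) (J2 g_ds g_dr αs βs ks βr) := by
    intro αs βs ks βr h hlt
    obtain ⟨ha, hb, hk, hr, hs, hrel⟩ := h
    have hblt : βs < Ps - αs := by linarith
    have hsq : (0:ℝ) ≤ Real.sqrt ks := Real.sqrt_nonneg _
    have hx1 : (0:ℝ) < 1 + g_rs ^ 2 * βs := by nlinarith [sq_nonneg g_rs]
    have hx2 : (0:ℝ) < 1 + g_ds ^ 2 * (αs + βs) + g_dr ^ 2 * (ks * αs + βr)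
        + 2 * g_ds * g_dr * Real.sqrt ks * αs := by
      nlinarith [sq_nonneg g_ds, sq_nonneg g_dr, mul_nonneg hk ha,
        mul_nonneg (mul_nonneg (mul_nonneg (mul_nonneg (by norm_num : (0:ℝ) ≤ 2) hgds.le) hgdr.le) hsq) ha]
    have h1 : J1 g_rs βs < J1 g_rs (Ps - αs) := by
      apply Real.logb_lt_logb (by norm_num) hx1
      nlinarith [mul_lt_mul_of_pos_left hblt (pow_pos hgrs 2)]
    have h2 : J2 g_ds g_dr αs βs ks βr < J2 g_ds g_dr αs (Ps - αs) ks βr := by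
      apply Real.logb_lt_logb (by norm_num) hx2
      nlinarith [mul_lt_mul_of_pos_left hblt (pow_pos hgds 2)]
    refine ⟨⟨ha, by linarith, hk, hr, by linarith, hrel⟩, ?_⟩
    exact lt_min ((min_le_left _ _).trans_lt h1) ((min_le_right _ _).trans_lt h2)
  refine ⟨key, ?_⟩
  intro αs βs ks βr h hmax
  by_contra hne
  have hlt : αs + βs < Ps := lt_of_le_of_ne h.2.2.2.2.1 hne
  obtain ⟨h1, h2⟩ := key αs βs ks βr h hlt
  exact absurd (hmax αs (Ps - αs) ks βr h1) (not_le.mpr h2)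
end

section
/- Fix g_rs, g_ds, g_dr > 0 and P_s, P_r > 0. Let (α_s, β_s, k_s, β_r) be a power allocation with α_s > 0 and k_s·α_s + β_r < P_r. Then the allocation (α_s, β_s, k_s', β_r) with k_s' = (P_r − β_r)/α_s is a power allocation using full relay power (k_s'·α_s + β_r = P_r), its rate J1 is unchanged, its rate J2 is strictly larger than before, and hence its composite decode-forward rate min(J1, J2) is at least that of the original allocation. Consequently, if the source performs block Markov coding (α_s > 0), the maximal composite decode-forward rate is attained with the relay using full power. -/
lemma aux_main (g_rs g_ds g_dr Ps Pr : ℝ)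
    (hgrs : 0 < g_rs) (hgds : 0 < g_ds) (hgdr : 0 < g_dr)
    (hPs : 0 < Ps) (hPr : 0 < Pr)
    (αs βs ks βr : ℝ) (hA : IsAlloc Ps Pr αs βs ks βr) (hαs : 0 < αs)
    (hlt : ks * αs + βr < Pr) :
      IsAlloc Ps Pr αs βs ((Pr - βr) / αs) βr ∧
      ((Pr - βr) / αs) * αs + βr = Pr ∧
      J1 g_rs βs = J1 g_rs βs ∧
      J2 g_ds g_dr αs βs ((Pr - βr) / αs) βr > J2 g_ds g_dr αs βs ks βr ∧
      min (J1 g_rs βs) (J2 g_ds g_dr αs βs ((Pr - βr) / αs) βr) ≥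
        min (J1 g_rs βs) (J2 g_ds g_dr αs βs ks βr) := by
  obtain ⟨h1, h2, h3, h4, h5, h6⟩ := hA
  have hks' : ks ≤ (Pr - βr) / αs := by
    rw [le_div_iff₀ hαs]; nlinarith
  have hks'pos : 0 ≤ (Pr - βr) / αs := le_trans h3 hks'
  have hfull : ((Pr - βr) / αs) * αs + βr = Pr := by
    field_simp
    ring
  have hlt' : ks < (Pr - βr) / αs := by
    rw [lt_div_iff₀ hαs]; nlinarith
  have hJ2 : J2 g_ds g_dr αs βs ((Pr - βr) / αs) βr > J2 g_ds g_dr αs βs ks βr := by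
    unfold J2
    apply Real.logb_lt_logb one_lt_two
    · have t1 : 0 ≤ g_ds ^ 2 * (αs + βs) := mul_nonneg (sq_nonneg _) (by linarith)
      have t2 : 0 ≤ g_dr ^ 2 * (ks * αs + βr) :=
        mul_nonneg (sq_nonneg _) (by nlinarith)
      have t3 : 0 ≤ 2 * g_ds * g_dr * Real.sqrt ks * αs :=
        mul_nonneg (by positivity) h1
      linarith
    · rw [hfull]
      have t1 : g_dr ^ 2 * (ks * αs + βr) < g_dr ^ 2 * Pr :=
        mul_lt_mul_of_pos_left hlt (by positivity)
      have hsq : Real.sqrt ks ≤ Real.sqrt ((Pr - βr) / αs) := Real.sqrt_le_sqrt hks'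
      have t2 : 2 * g_ds * g_dr * Real.sqrt ks * αs ≤
          2 * g_ds * g_dr * Real.sqrt ((Pr - βr) / αs) * αs :=
        mul_le_mul_of_nonneg_right (mul_le_mul_of_nonneg_left hsq (by positivity)) h1
      linarith
  refine ⟨⟨h1, h2, hks'pos, h4, h5, le_of_eq hfull⟩, hfull, rfl, hJ2, ?_⟩
  exact min_le_min le_rfl hJ2.le

/-- if the source performs block Markov coding (`α_s > 0`) and the relay
does not use full power, scaling up `k_s` to `(P_r - β_r)/α_s` yields a valid allocation
with full relay power, the same `J1`, a strictly larger `J2`, and hence a rate at least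
as large; consequently, with `α_s > 0` the maximal rate is attained at full relay power. -/
theorem relay_uses_full_power (g_rs g_ds g_dr Ps Pr : ℝ)
    (hgrs : 0 < g_rs) (hgds : 0 < g_ds) (hgdr : 0 < g_dr)
    (hPs : 0 < Ps) (hPr : 0 < Pr) :
    (∀ αs βs ks βr : ℝ, IsAlloc Ps Pr αs βs ks βr → 0 < αs → ks * αs + βr < Pr →
      IsAlloc Ps Pr αs βs ((Pr - βr) / αs) βr ∧
      ((Pr - βr) / αs) * αs + βr = Pr ∧
      J1 g_rs βs = J1 g_rs βs ∧
      J2 g_ds g_dr αs βs ((Pr - βr) / αs) βr > J2 g_ds g_dr αs βs ks βr ∧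
      min (J1 g_rs βs) (J2 g_ds g_dr αs βs ((Pr - βr) / αs) βr) ≥
        min (J1 g_rs βs) (J2 g_ds g_dr αs βs ks βr)) ∧
    (∀ αs βs ks βr : ℝ, IsAlloc Ps Pr αs βs ks βr → 0 < αs →
      ∃ ks' βr' : ℝ, IsAlloc Ps Pr αs βs ks' βr' ∧ ks' * αs + βr' = Pr ∧
        min (J1 g_rs βs) (J2 g_ds g_dr αs βs ks βr) ≤
          min (J1 g_rs βs) (J2 g_ds g_dr αs βs ks' βr')) := by
  constructor
  · intro αs βs ks βr hA hαs hlt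
    exact aux_main g_rs g_ds g_dr Ps Pr hgrs hgds hgdr hPs hPr αs βs ks βr hA hαs hlt
  · intro αs βs ks βr hA hαs
    rcases lt_or_eq_of_le hA.2.2.2.2.2 with hlt | heq
    · obtain ⟨hA', hfull, _, _, hge⟩ :=
        aux_main g_rs g_ds g_dr Ps Pr hgrs hgds hgdr hPs hPr αs βs ks βr hA hαs hlt
      exact ⟨(Pr - βr) / αs, βr, hA', hfull, hge⟩
    · exact ⟨ks, βr, hA, heq, le_rfl⟩
end

section
/- Fix g_rs, g_ds, g_dr > 0 and P_s, P_r > 0, and suppose the link state lies in regime R0, i.e. g_rs² ≤ g_ds². Then every power allocation (α_s, β_s, k_s, β_r) satisfies min(J1, J2) ≤ log₂(1 + g_rs²·P_s) ≤ log₂(1 + g_ds²·P_s); in other words, the direct-transmission rate log₂(1 + g_ds²·P_s) is at least the composite decode-forward rate of every power allocation, so direct transmission is optimal in regime R0. -/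
/-- in link-state regime R0 (`g_rs² ≤ g_ds²`), the composite
decode-forward rate of every power allocation is at most `log₂(1 + g_rs² P_s)`,
which in turn is at most the direct-transmission rate `log₂(1 + g_ds² P_s)`;
direct transmission is optimal. -/
theorem regime_R0_direct_transmission_optimal (g_rs g_ds g_dr Ps Pr : ℝ)
    (hgrs : 0 < g_rs) (hgds : 0 < g_ds) (hgdr : 0 < g_dr)
    (hPs : 0 < Ps) (hPr : 0 < Pr)
    (hR0 : g_rs ^ 2 ≤ g_ds ^ 2) :
    ∀ αs βs ks βr : ℝ, IsAlloc Ps Pr αs βs ks βr →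
      min (J1 g_rs βs) (J2 g_ds g_dr αs βs ks βr) ≤ Real.logb 2 (1 + g_rs ^ 2 * Ps) ∧
      Real.logb 2 (1 + g_rs ^ 2 * Ps) ≤ Real.logb 2 (1 + g_ds ^ 2 * Ps) := by
  intro αs βs ks βr ⟨ha, hb, hk, hr, hsum, _⟩
  constructor
  · refine le_trans (min_le_left _ _) ?_
    unfold J1
    have h0 : (0:ℝ) < 1 + g_rs ^ 2 * βs := by positivity
    apply Real.logb_le_logb_of_le one_lt_two h0
    nlinarith
  · have h0 : (0:ℝ) < 1 + g_rs ^ 2 * Ps := by positivity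
    apply Real.logb_le_logb_of_le one_lt_two h0
    nlinarith
end

section
/- Fix g_rs, g_ds, g_dr > 0 and P_s, P_r > 0, and suppose the link state lies in regime R1, i.e. g_ds² < g_rs² ≤ g_ds² + (P_r/P_s)·g_dr². Set β_r* = (g_rs² − g_ds²)·P_s/g_dr². Then: (i) 0 < β_r* ≤ P_r, so the independent-coding allocation (α_s, β_s, k_s, β_r) = (0, P_s, 0, β_r*) is a valid power allocation, and β_r* < P_r whenever g_rs² < g_ds² + (P_r/P_s)·g_dr² (relay power savings); (ii) at this allocation J1 = J2 = log₂(1 + g_rs²·P_s); and (iii) every power allocation satisfies min(J1, J2) ≤ log₂(1 + g_rs²·P_s), so the independent-coding allocation maximizes the composite decode-forward rate in regime R1. -/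
/-- in link-state regime R1 (`g_ds² < g_rs² ≤ g_ds² + (P_r/P_s) g_dr²`),
the independent-coding allocation `(0, P_s, 0, β_r*)` with
`β_r* = (g_rs² - g_ds²) P_s / g_dr²` is valid, saves relay power whenever the regime
condition is strict, achieves `J1 = J2 = log₂(1 + g_rs² P_s)`, and no power allocation
achieves a larger composite decode-forward rate. -/
theorem regime_R1_independent_coding_optimal (g_rs g_ds g_dr Ps Pr : ℝ)
    (hgrs : 0 < g_rs) (hgds : 0 < g_ds) (hgdr : 0 < g_dr)
    (hPs : 0 < Ps) (hPr : 0 < Pr)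
    (hR1l : g_ds ^ 2 < g_rs ^ 2) (hR1r : g_rs ^ 2 ≤ g_ds ^ 2 + (Pr / Ps) * g_dr ^ 2)
    (βrStar : ℝ) (hβrStar : βrStar = (g_rs ^ 2 - g_ds ^ 2) * Ps / g_dr ^ 2) :
    (0 < βrStar ∧ βrStar ≤ Pr) ∧
    IsAlloc Ps Pr 0 Ps 0 βrStar ∧
    (g_rs ^ 2 < g_ds ^ 2 + (Pr / Ps) * g_dr ^ 2 → βrStar < Pr) ∧
    J1 g_rs Ps = Real.logb 2 (1 + g_rs ^ 2 * Ps) ∧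
    J2 g_ds g_dr 0 Ps 0 βrStar = Real.logb 2 (1 + g_rs ^ 2 * Ps) ∧
    (∀ αs βs ks βr : ℝ, IsAlloc Ps Pr αs βs ks βr →
      min (J1 g_rs βs) (J2 g_ds g_dr αs βs ks βr) ≤ Real.logb 2 (1 + g_rs ^ 2 * Ps)) := by

  have hdr2 : (0:ℝ) < g_dr ^ 2 := by positivity
  have hpos : 0 < βrStar := by
    rw [hβrStar]
    exact div_pos (mul_pos (by linarith) hPs) hdr2
  have hle : βrStar ≤ Pr := by
    rw [hβrStar, div_le_iff₀ hdr2]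
    have h : (g_rs ^ 2 - g_ds ^ 2) ≤ (Pr / Ps) * g_dr ^ 2 := by linarith
    calc (g_rs ^ 2 - g_ds ^ 2) * Ps ≤ (Pr / Ps) * g_dr ^ 2 * Ps := by
          exact mul_le_mul_of_nonneg_right h hPs.le
      _ = Pr * g_dr ^ 2 := by field_simp
  refine ⟨⟨hpos, hle⟩, ⟨le_refl 0, hPs.le, le_refl 0, hpos.le, by linarith, by
      simpa using hle⟩, ?_, ?_, ?_, ?_⟩
  · intro hstrict
    rw [hβrStar, div_lt_iff₀ hdr2]
    have h : (g_rs ^ 2 - g_ds ^ 2) < (Pr / Ps) * g_dr ^ 2 := by linarith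
    calc (g_rs ^ 2 - g_ds ^ 2) * Ps < (Pr / Ps) * g_dr ^ 2 * Ps := by
          exact mul_lt_mul_of_pos_right h hPs
      _ = Pr * g_dr ^ 2 := by field_simp
  · rfl
  · unfold J2
    rw [hβrStar]
    congr 1
    field_simp
    ring
  · rintro αs βs ks βr ⟨hαs, hβs, hks, hβr, hsum, hrel⟩
    refine le_trans (min_le_left _ _) ?_
    unfold J1
    have hβsPs : βs ≤ Ps := by linarith
    exact Real.logb_le_logb_of_le one_lt_two (by nlinarith [sq_nonneg g_rs]) (by nlinarith [sq_nonneg g_rs])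
end

section
/- Fix g_rs, g_ds, g_dr > 0 and P_s, P_r > 0, and suppose the link state lies in regime R2, i.e. g_rs²·P_s > g_ds²·P_s + g_dr²·P_r. Along the block-Markov curve of allocations α ↦ (α_s, β_s, k_s, β_r) = (α, P_s − α, P_r/α, 0) for α ∈ (0, P_s], the function J1(α) = log₂(1 + g_rs²·(P_s − α)) is strictly decreasing and J2(α) = log₂(1 + g_ds²·P_s + g_dr²·P_r + 2·g_ds·g_dr·√(P_r·α)) is strictly increasing; the discriminant g_ds²·g_dr²·P_r − g_rs²·(g_dr²·P_r + g_ds²·P_s − g_rs²·P_s) is strictly positive; and there is a unique α = ξ ∈ (0, P_s) with J1(ξ) = J2(ξ), given in closed form by ξ = [(−g_ds·g_dr·√P_r + √(g_ds²·g_dr²·P_r − g_rs²·(g_dr²·P_r + g_ds²·P_s − g_rs²·P_s)))/g_rs²]². -/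
set_option maxHeartbeats 1000000 in
/-- in regime R2 (`g_rs² P_s > g_ds² P_s + g_dr² P_r`), along the
block-Markov curve `α ↦ (α, P_s - α, P_r/α, 0)` on `(0, P_s]`, `J1(α)` is strictly
decreasing and `J2(α)` is strictly increasing, the discriminant is strictly positive,
and the two curves cross at the unique point `α = ξ` of `(0, P_s)`, with `ξ` in closed
form. -/
theorem regime_R2_unique_crossing (g_rs g_ds g_dr Ps Pr : ℝ)
    (hgrs : 0 < g_rs) (hgds : 0 < g_ds) (hgdr : 0 < g_dr)
    (hPs : 0 < Ps) (hPr : 0 < Pr)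
    (hR2 : g_rs ^ 2 * Ps > g_ds ^ 2 * Ps + g_dr ^ 2 * Pr)
    (J1c J2c : ℝ → ℝ)
    (hJ1c : ∀ α, J1c α = Real.logb 2 (1 + g_rs ^ 2 * (Ps - α)))
    (hJ2c : ∀ α, J2c α = Real.logb 2 (1 + g_ds ^ 2 * Ps + g_dr ^ 2 * Pr
      + 2 * g_ds * g_dr * Real.sqrt (Pr * α)))
    (ξ : ℝ)
    (hξ : ξ = ((-(g_ds * g_dr * Real.sqrt Pr)
      + Real.sqrt (g_ds ^ 2 * g_dr ^ 2 * Pr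
        - g_rs ^ 2 * (g_dr ^ 2 * Pr + g_ds ^ 2 * Ps - g_rs ^ 2 * Ps))) / g_rs ^ 2) ^ 2) :
    StrictAntiOn J1c (Set.Ioc 0 Ps) ∧
    StrictMonoOn J2c (Set.Ioc 0 Ps) ∧
    0 < g_ds ^ 2 * g_dr ^ 2 * Pr - g_rs ^ 2 * (g_dr ^ 2 * Pr + g_ds ^ 2 * Ps - g_rs ^ 2 * Ps) ∧
    (ξ ∈ Set.Ioo 0 Ps ∧ J1c ξ = J2c ξ) ∧
    (∀ α ∈ Set.Ioo (0 : ℝ) Ps, J1c α = J2c α → α = ξ) := by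
  have hgrs2 : (0:ℝ) < g_rs ^ 2 := by positivity
  have hsPr : (0:ℝ) < Real.sqrt Pr := Real.sqrt_pos.mpr hPr
  have hPr2 : Real.sqrt Pr ^ 2 = Pr := Real.sq_sqrt hPr.le
  set b := g_ds * g_dr * Real.sqrt Pr with hb
  have hb0 : 0 < b := by positivity
  have hb2 : b ^ 2 = g_ds ^ 2 * g_dr ^ 2 * Pr := by
    rw [hb]; linear_combination g_ds ^ 2 * g_dr ^ 2 * hPr2
  set D := g_ds ^ 2 * g_dr ^ 2 * Pr - g_rs ^ 2 * (g_dr ^ 2 * Pr + g_ds ^ 2 * Ps - g_rs ^ 2 * Ps)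
    with hDdef
  have hA : 0 < g_rs ^ 2 * Ps - (g_ds ^ 2 * Ps + g_dr ^ 2 * Pr) := by linarith
  have hDpos : 0 < D := by
    rw [hDdef]
    nlinarith [mul_pos hgrs2 hA, mul_pos (mul_pos (pow_pos hgds 2) (pow_pos hgdr 2)) hPr]
  have hsD2 : Real.sqrt D ^ 2 = D := Real.sq_sqrt hDpos.le
  have hbD : b < Real.sqrt D := by
    have h2 : b ^ 2 < D := by rw [hb2, hDdef]; nlinarith [mul_pos hgrs2 hA]
    calc b = Real.sqrt (b ^ 2) := (Real.sqrt_sq hb0.le).symm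
    _ < Real.sqrt D := Real.sqrt_lt_sqrt (by positivity) h2
  set t := (-b + Real.sqrt D) / g_rs ^ 2 with ht
  have hξt : ξ = t ^ 2 := hξ
  clear_value t D b
  clear hξ
  have htpos : 0 < t := by rw [ht]; apply div_pos _ hgrs2; linarith
  have hξpos : 0 < ξ := by rw [hξt]; positivity
  have hkey : g_rs ^ 2 * t ^ 2 + 2 * b * t
      = g_rs ^ 2 * Ps - (g_ds ^ 2 * Ps + g_dr ^ 2 * Pr) := by
    have hX : (-b + Real.sqrt D) ^ 2 + 2 * b * (-b + Real.sqrt D) = D - b ^ 2 := by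
      linear_combination hsD2
    have hDb : D - b ^ 2 = g_rs ^ 2 * (g_rs ^ 2 * Ps - (g_ds ^ 2 * Ps + g_dr ^ 2 * Pr)) := by
      rw [hDdef, hb2]; ring
    rw [ht]
    field_simp
    linear_combination (hX.trans hDb)
  have hξPs : ξ < Ps := by
    have h1 : g_rs ^ 2 * ξ < g_rs ^ 2 * Ps := by
      rw [hξt]; nlinarith [mul_pos hb0 htpos]
    exact lt_of_mul_lt_mul_left h1 hgrs2.le
  have hsqξ : Real.sqrt ξ = t := by rw [hξt]; exact Real.sqrt_sq htpos.le
  have hargeq : ∀ α : ℝ, 0 ≤ α →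
      (1 + g_ds ^ 2 * Ps + g_dr ^ 2 * Pr + 2 * g_ds * g_dr * Real.sqrt (Pr * α))
        = 1 + g_ds ^ 2 * Ps + g_dr ^ 2 * Pr + 2 * b * Real.sqrt α := by
    intro α hα
    rw [Real.sqrt_mul hPr.le, hb]; ring
  refine ⟨?_, ?_, hDpos, ⟨⟨hξpos, hξPs⟩, ?_⟩, ?_⟩
  · intro x hx y hy hxy
    rw [hJ1c, hJ1c]
    apply Real.logb_lt_logb one_lt_two
    · nlinarith [hy.2]
    · nlinarith
  · intro x hx y hy hxy
    rw [hJ2c, hJ2c]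
    apply Real.logb_lt_logb one_lt_two
    · positivity
    · have h : Real.sqrt (Pr * x) < Real.sqrt (Pr * y) :=
        Real.sqrt_lt_sqrt (mul_nonneg hPr.le hx.1.le) (mul_lt_mul_of_pos_left hxy hPr)
      have h2 := mul_lt_mul_of_pos_left h (show (0:ℝ) < 2 * g_ds * g_dr by positivity)
      linarith
  · rw [hJ1c, hJ2c]
    congr 1
    rw [hargeq ξ hξpos.le, hsqξ, hξt]
    linarith [hkey]
  · intro α hα heq
    rw [hJ1c, hJ2c] at heq
    have hs0 : 0 ≤ Real.sqrt α := Real.sqrt_nonneg α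
    have hs2 : Real.sqrt α ^ 2 = α := Real.sq_sqrt hα.1.le
    have harg : 1 + g_rs ^ 2 * (Ps - α)
        = 1 + g_ds ^ 2 * Ps + g_dr ^ 2 * Pr + 2 * b * Real.sqrt α := by
      have h1 : (0:ℝ) < 1 + g_rs ^ 2 * (Ps - α) := by nlinarith [hα.2]
      have h2 : (0:ℝ) < 1 + g_ds ^ 2 * Ps + g_dr ^ 2 * Pr
          + 2 * g_ds * g_dr * Real.sqrt (Pr * α) := by positivity
      have h3 := Real.logb_injOn_pos (by norm_num : (1:ℝ) < 2)
        (Set.mem_Ioi.mpr h1) (Set.mem_Ioi.mpr h2) heq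
      rw [h3, hargeq α hα.1.le]
    have hkey2 : g_rs ^ 2 * Real.sqrt α ^ 2 + 2 * b * Real.sqrt α
        = g_rs ^ 2 * Ps - (g_ds ^ 2 * Ps + g_dr ^ 2 * Pr) := by
      rw [hs2]; linarith [harg]
    have hfac : (Real.sqrt α - t) * (g_rs ^ 2 * (Real.sqrt α + t) + 2 * b) = 0 := by
      linear_combination hkey2 - hkey
    have hpos : 0 < g_rs ^ 2 * (Real.sqrt α + t) + 2 * b := by
      have hst : 0 < Real.sqrt α + t := by linarith
      positivity
    have hst : Real.sqrt α = t := by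
      rcases mul_eq_zero.mp hfac with h | h
      · linarith [sub_eq_zero.mp h]
      · linarith
    rw [hξt, ← hst, hs2]
end

section
/- Fix g_rs, g_ds, g_dr > 0 and P_s, P_r > 0, and suppose the link state lies in regime R2, i.e. g_rs²·P_s > g_ds²·P_s + g_dr²·P_r. Let ξ = [(−g_ds·g_dr·√P_r + √(g_ds²·g_dr²·P_r − g_rs²·(g_dr²·P_r + g_ds²·P_s − g_rs²·P_s)))/g_rs²]². Then every power allocation (α_s, β_s, k_s, β_r) satisfies min(J1, J2) ≤ log₂(1 + g_rs²·(P_s − ξ)), and this value is attained by the block Markov allocation (α_s, β_s, k_s, β_r) = (ξ, P_s − ξ, P_r/ξ, 0); thus coherent block Markov coding with full relay power and no independent-coding component is rate-optimal in regime R2. -/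
set_option maxHeartbeats 1000000 in
/-- in regime R2 (`g_rs² P_s > g_ds² P_s + g_dr² P_r`), every power
allocation has composite decode-forward rate at most `log₂(1 + g_rs² (P_s - ξ))`, and
this rate is attained by the block Markov allocation `(ξ, P_s - ξ, P_r/ξ, 0)` (full
relay power, no independent-coding component). -/
theorem regime_R2_block_markov_optimal (g_rs g_ds g_dr Ps Pr : ℝ)
    (hgrs : 0 < g_rs) (hgds : 0 < g_ds) (hgdr : 0 < g_dr)
    (hPs : 0 < Ps) (hPr : 0 < Pr)
    (hR2 : g_rs ^ 2 * Ps > g_ds ^ 2 * Ps + g_dr ^ 2 * Pr)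
    (ξ : ℝ)
    (hξ : ξ = ((-(g_ds * g_dr * Real.sqrt Pr)
      + Real.sqrt (g_ds ^ 2 * g_dr ^ 2 * Pr
        - g_rs ^ 2 * (g_dr ^ 2 * Pr + g_ds ^ 2 * Ps - g_rs ^ 2 * Ps))) / g_rs ^ 2) ^ 2) :
    (∀ αs βs ks βr : ℝ, IsAlloc Ps Pr αs βs ks βr →
      min (J1 g_rs βs) (J2 g_ds g_dr αs βs ks βr) ≤
        Real.logb 2 (1 + g_rs ^ 2 * (Ps - ξ))) ∧
    IsAlloc Ps Pr ξ (Ps - ξ) (Pr / ξ) 0 ∧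
    min (J1 g_rs (Ps - ξ)) (J2 g_ds g_dr ξ (Ps - ξ) (Pr / ξ) 0) =
      Real.logb 2 (1 + g_rs ^ 2 * (Ps - ξ)) := by
  have hr2 : (0:ℝ) < g_rs ^ 2 := by positivity
  obtain ⟨s, hs⟩ : ∃ s, s = Real.sqrt Pr := ⟨_, rfl⟩
  obtain ⟨D, hDdef⟩ : ∃ D, D = g_ds ^ 2 * g_dr ^ 2 * Pr
      - g_rs ^ 2 * (g_dr ^ 2 * Pr + g_ds ^ 2 * Ps - g_rs ^ 2 * Ps) := ⟨_, rfl⟩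
  obtain ⟨x, hxdef⟩ : ∃ x, x = (-(g_ds * g_dr * s) + Real.sqrt D) / g_rs ^ 2 := ⟨_, rfl⟩
  have hs2 : s ^ 2 = Pr := by rw [hs]; exact Real.sq_sqrt hPr.le
  have hs0 : 0 ≤ s := by rw [hs]; exact Real.sqrt_nonneg _
  have hspos : 0 < s := by rw [hs]; exact Real.sqrt_pos.mpr hPr
  have hDgt : (g_ds * g_dr * s) ^ 2 < D := by
    have he : (g_ds * g_dr * s) ^ 2 = g_ds ^ 2 * g_dr ^ 2 * Pr := by
      rw [mul_pow, mul_pow, hs2]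
    rw [hDdef, he]
    nlinarith [hR2, hr2]
  have hD : 0 ≤ D := le_of_lt (lt_of_le_of_lt (by positivity) hDgt)
  have hsD2 : Real.sqrt D ^ 2 = D := Real.sq_sqrt hD
  have hxξ : ξ = x ^ 2 := by rw [hξ, hxdef, hs, hDdef]
  have hsDgt : g_ds * g_dr * s < Real.sqrt D := by
    have := Real.sqrt_lt_sqrt (by positivity) hDgt
    rwa [Real.sqrt_sq (by positivity)] at this
  have hxpos : 0 < x := by
    rw [hxdef]; apply div_pos _ hr2; linarith
  have hsqrtξ : Real.sqrt ξ = x := by rw [hxξ, Real.sqrt_sq hxpos.le]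
  have h1 : g_rs ^ 2 * x = -(g_ds * g_dr * s) + Real.sqrt D := by
    rw [hxdef]; field_simp
  have h2 : (g_rs ^ 2 * x + g_ds * g_dr * s) ^ 2 = D := by
    rw [h1]; linear_combination hsD2
  have h2' : (g_rs ^ 2 * x + g_ds * g_dr * s) ^ 2
      = g_ds ^ 2 * g_dr ^ 2 * Pr
        - g_rs ^ 2 * (g_dr ^ 2 * Pr + g_ds ^ 2 * Ps - g_rs ^ 2 * Ps) := by
    rw [h2, hDdef]
  -- the quadratic identity defining x
  have hquad0 : g_rs ^ 2 * (g_rs ^ 2 * x ^ 2 + 2 * (g_ds * g_dr * s) * x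
      + (g_ds ^ 2 * Ps + g_dr ^ 2 * Pr - g_rs ^ 2 * Ps)) = 0 := by
    linear_combination h2' - g_ds ^ 2 * g_dr ^ 2 * hs2
  have hquad : g_rs ^ 2 * x ^ 2 + 2 * (g_ds * g_dr * s) * x
      + (g_ds ^ 2 * Ps + g_dr ^ 2 * Pr - g_rs ^ 2 * Ps) = 0 :=
    (mul_eq_zero.mp hquad0).resolve_left hr2.ne'
  -- key: the two rate arguments coincide at the block Markov allocation
  have hkey : g_rs ^ 2 * (Ps - ξ)
      = g_ds ^ 2 * Ps + g_dr ^ 2 * Pr + 2 * g_ds * g_dr * s * x := by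
    rw [hxξ]; linarith [hquad]
  have hξpos : 0 < ξ := by rw [hxξ]; positivity
  have hξlt : ξ < Ps := by
    have hpos : 0 < g_ds ^ 2 * Ps + g_dr ^ 2 * Pr + 2 * g_ds * g_dr * s * x := by
      positivity
    nlinarith [hkey, hr2]
  have htargpos : (0:ℝ) < 1 + g_rs ^ 2 * (Ps - ξ) := by nlinarith [hr2]
  refine ⟨?_, ?_, ?_⟩
  · -- upper bound for every allocation
    rintro αs βs ks βr ⟨hαs, hβs, hks, hβr, hsum, hrel⟩
    by_cases hcase : βs ≤ Ps - ξ
    · refine le_trans (min_le_left _ _) ?_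
      unfold J1
      apply (Real.logb_le_logb one_lt_two (by positivity) htargpos).mpr
      nlinarith [hr2]
    · push_neg at hcase
      have hαξ : αs ≤ ξ := by linarith
      refine le_trans (min_le_right _ _) ?_
      unfold J2
      have hsk : Real.sqrt ks * αs ≤ s * x := by
        have e1 : Real.sqrt ks * αs = Real.sqrt (ks * αs) * Real.sqrt αs := by
          rw [Real.sqrt_mul hks, mul_assoc, Real.mul_self_sqrt hαs]
        rw [e1]
        have h3 : Real.sqrt (ks * αs) ≤ s := by
          rw [hs]; apply Real.sqrt_le_sqrt; linarith
        have h4 : Real.sqrt αs ≤ x := by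
          rw [← hsqrtξ]; exact Real.sqrt_le_sqrt hαξ
        exact mul_le_mul h3 h4 (Real.sqrt_nonneg _) hs0
      apply (Real.logb_le_logb one_lt_two ?_ htargpos).mpr
      · rw [hkey]
        have hds : (0:ℝ) ≤ 2 * g_ds * g_dr := by positivity
        nlinarith [mul_le_mul_of_nonneg_left hsk hds]
      · have h5 : 0 ≤ 2 * g_ds * g_dr * Real.sqrt ks * αs := by positivity
        have h6 : (0:ℝ) ≤ g_ds ^ 2 * (αs + βs) := by positivity
        have h7 : (0:ℝ) ≤ g_dr ^ 2 * (ks * αs + βr) := by positivity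
        linarith
  · -- the block Markov allocation is feasible
    refine ⟨hξpos.le, by linarith, by positivity, le_refl _, by linarith, ?_⟩
    rw [div_mul_cancel₀ _ hξpos.ne']
    simp
  · -- the rate is attained
    have hJ2arg : 1 + g_ds ^ 2 * (ξ + (Ps - ξ)) + g_dr ^ 2 * (Pr / ξ * ξ + 0)
        + 2 * g_ds * g_dr * Real.sqrt (Pr / ξ) * ξ = 1 + g_rs ^ 2 * (Ps - ξ) := by
      have e1 : Real.sqrt (Pr / ξ) * ξ = s * x := by
        rw [Real.sqrt_div hPr.le, ← hs, hsqrtξ, hxξ]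
        field_simp
      rw [div_mul_cancel₀ _ hξpos.ne', mul_assoc (2 * g_ds * g_dr), e1, hkey]
      ring
    unfold J1 J2
    rw [hJ2arg]
    simp
end

section
/- Let X and Y be independent random variables, exponentially distributed with rates λ_rs > 0 and λ_ds > 0 respectively. For a target rate R > 0 and source power P_s > 0, set β1² = (2^R − 1)/P_s. Then the direct-transmission outage probability satisfies Pr(Y < β1² and X ≤ Y) = 1 − e^{−λ_ds·β1²} − (λ_ds/(λ_rs + λ_ds))·(1 − e^{−(λ_rs + λ_ds)·β1²}). -/
open MeasureTheory ProbabilityTheory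

open Real Set

lemma expMeasure_Iic {r : ℝ} (hr : 0 < r) (y : ℝ) :
    expMeasure r (Iic y) = ENNReal.ofReal (if 0 ≤ y then 1 - Real.exp (-(r * y)) else 0) := by
  rw [expMeasure, gammaMeasure, withDensity_apply _ measurableSet_Iic]
  exact lintegral_exponentialPDF_eq_antiDeriv hr y

lemma expMeasure_Iio {r : ℝ} (hr : 0 < r) (y : ℝ) :
    expMeasure r (Iio y) = ENNReal.ofReal (if 0 ≤ y then 1 - Real.exp (-(r * y)) else 0) := by
  rw [← expMeasure_Iic hr]
  refine measure_congr ?_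
  have h : (volume : Measure ℝ) {y} = 0 := measure_singleton y
  have h2 : expMeasure r {y} = 0 :=
    (withDensity_absolutelyContinuous volume (gammaPDF 1 r)) h
  rw [Filter.eventuallyEq_set]
  filter_upwards [measure_eq_zero_iff_ae_notMem.mp h2] with t ht
  simp only [mem_Iio, mem_Iic, mem_singleton_iff] at *
  constructor <;> intro hh
  · exact hh.le
  · rcases lt_or_eq_of_le hh with h' | h'
    · exact h'
    · exact absurd h' ht

lemma expMeasure_Ico {r : ℝ} (hr : 0 < r) {x b : ℝ} (hx : 0 ≤ x) (hxb : x ≤ b) :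
    expMeasure r (Ico x b) = ENNReal.ofReal (Real.exp (-(r * x)) - Real.exp (-(r * b))) := by
  have := isProbabilityMeasure_expMeasure hr
  have hIco : Ico x b = Iio b \ Iio x := by ext t; simp only [mem_Ico, mem_diff, mem_Iio, not_lt]; exact and_comm
  rw [hIco, measure_diff (Iio_subset_Iio hxb) measurableSet_Iio.nullMeasurableSet
    (measure_ne_top _ _), expMeasure_Iio hr, expMeasure_Iio hr, if_pos (hx.trans hxb), if_pos hx,
    ← ENNReal.ofReal_sub _ (sub_nonneg.mpr (Real.exp_le_one_iff.mpr (neg_nonpos.mpr (mul_nonneg hr.le hx))))]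
  ring_nf

lemma intExp {c : ℝ} (hc : c ≠ 0) (b : ℝ) :
    ∫ x in (0:ℝ)..b, Real.exp (-(c * x)) = (1 - Real.exp (-(c * b))) / c := by
  have : ∀ x : ℝ, Real.exp (-(c * x)) = Real.exp ((-c) * x) := by intro x; ring_nf
  simp_rw [this]
  rw [_root_.intervalIntegral.integral_comp_mul_left (fun x => Real.exp x) (neg_ne_zero.mpr hc),
    integral_exp, smul_eq_mul, mul_zero, Real.exp_zero, inv_neg]
  ring

/-- direct-transmission outage probability in regime R0. For independent
`X ~ exp(λ_rs)`, `Y ~ exp(λ_ds)`, target rate `R > 0`, source power `P_s > 0` and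
`β1² = (2^R - 1)/P_s`,
`Pr(Y < β1² ∧ X ≤ Y) = 1 - e^{-λ_ds β1²} - (λ_ds/(λ_rs+λ_ds))(1 - e^{-(λ_rs+λ_ds) β1²})`. -/

theorem direct_transmission_outage {Ω : Type*} [MeasurableSpace Ω]
    (μ : Measure Ω) [IsProbabilityMeasure μ]
    (X Y : Ω → ℝ) (hX : Measurable X) (hY : Measurable Y)
    (lrs lds : ℝ) (hlrs : 0 < lrs) (hlds : 0 < lds)
    (hindep : IndepFun X Y μ)
    (hXlaw : μ.map X = expMeasure lrs)
    (hYlaw : μ.map Y = expMeasure lds)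
    (R Ps : ℝ) (hR : 0 < R) (hPs : 0 < Ps)
    (b1sq : ℝ) (hb1sq : b1sq = ((2 : ℝ) ^ R - 1) / Ps) :
    μ {ω | Y ω < b1sq ∧ X ω ≤ Y ω} =
      ENNReal.ofReal (1 - Real.exp (-(lds * b1sq))
        - lds / (lrs + lds) * (1 - Real.exp (-((lrs + lds) * b1sq)))) := by
  have hprs := isProbabilityMeasure_expMeasure hlrs
  have hpds := isProbabilityMeasure_expMeasure hlds
  have hb : 0 < b1sq := by
    rw [hb1sq]
    have h2 : (1:ℝ) < 2 ^ R := (Real.one_lt_rpow_iff_of_pos two_pos).mpr (Or.inl ⟨one_lt_two, hR⟩)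
    exact div_pos (by linarith) hPs
  set b := b1sq with hbdef
  have hS : MeasurableSet {p : ℝ × ℝ | p.2 < b ∧ p.1 ≤ p.2} :=
    (measurableSet_lt measurable_snd measurable_const).inter
      (measurableSet_le measurable_fst measurable_snd)
  have hmap : μ.map (fun ω => (X ω, Y ω)) = (expMeasure lrs).prod (expMeasure lds) := by
    rw [← hXlaw, ← hYlaw]
    exact (indepFun_iff_map_prod_eq_prod_map_map hX.aemeasurable hY.aemeasurable).mp hindep
  have h1 : μ {ω | Y ω < b ∧ X ω ≤ Y ω}
      = ((expMeasure lrs).prod (expMeasure lds)) {p : ℝ × ℝ | p.2 < b ∧ p.1 ≤ p.2} := by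
    rw [← hmap, Measure.map_apply (hX.prodMk hY) hS]
    rfl
  rw [h1, Measure.prod_apply hS]
  have hpre : ∀ x : ℝ, (Prod.mk x ⁻¹' {p : ℝ × ℝ | p.2 < b ∧ p.1 ≤ p.2}) = Ico x b := by
    intro x; ext t; simp only [mem_preimage, mem_setOf_eq, mem_Ico]; tauto
  simp_rw [hpre]
  rw [show expMeasure lrs = volume.withDensity (exponentialPDF lrs) from rfl,
    lintegral_withDensity_eq_lintegral_mul_non_measurable _
      (show Measurable (exponentialPDF lrs) from (measurable_exponentialPDFReal lrs).ennreal_ofReal)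
      (Filter.Eventually.of_forall fun x => ENNReal.ofReal_lt_top)]
  have hkey : ∀ x : ℝ, (exponentialPDF lrs * fun x => expMeasure lds (Ico x b)) x
      = (Ico (0:ℝ) b).indicator
        (fun x => ENNReal.ofReal
          (lrs * Real.exp (-(lrs*x)) * (Real.exp (-(lds*x)) - Real.exp (-(lds*b))))) x := by
    intro x
    simp only [Pi.mul_apply]
    rcases lt_or_ge x 0 with hx | hx
    · rw [exponentialPDF_of_neg hx, zero_mul,
        Set.indicator_of_notMem (fun h => absurd h.1 hx.not_ge)]
    · rcases lt_or_ge x b with hxb | hxb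
      · have hnn : 0 ≤ Real.exp (-(lds*x)) - Real.exp (-(lds*b)) :=
          sub_nonneg.mpr (Real.exp_le_exp.mpr (by nlinarith))
        rw [exponentialPDF_of_nonneg hx, expMeasure_Ico hlds hx hxb.le,
          Set.indicator_of_mem (show x ∈ Ico (0:ℝ) b from ⟨hx, hxb⟩), ← ENNReal.ofReal_mul (by positivity)]
      · rw [Set.Ico_eq_empty hxb.not_gt, measure_empty, mul_zero,
          Set.indicator_of_notMem (fun h => absurd h.2 hxb.not_gt)]
  rw [lintegral_congr hkey, lintegral_indicator measurableSet_Ico _]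
  have hcont : Continuous
      (fun x => lrs * Real.exp (-(lrs*x)) * (Real.exp (-(lds*x)) - Real.exp (-(lds*b)))) := by
    fun_prop
  have hint : IntegrableOn
      (fun x => lrs * Real.exp (-(lrs*x)) * (Real.exp (-(lds*x)) - Real.exp (-(lds*b))))
      (Ico 0 b) volume :=
    (hcont.integrableOn_Icc).mono_set Ico_subset_Icc_self
  have hnn : 0 ≤ᵐ[volume.restrict (Ico (0:ℝ) b)]
      (fun x => lrs * Real.exp (-(lrs*x)) * (Real.exp (-(lds*x)) - Real.exp (-(lds*b)))) := by
    refine (ae_restrict_iff' measurableSet_Ico).mpr (ae_of_all _ fun x hx => ?_)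
    have : 0 ≤ Real.exp (-(lds*x)) - Real.exp (-(lds*b)) :=
      sub_nonneg.mpr (Real.exp_le_exp.mpr (by nlinarith [hx.1, hx.2]))
    positivity
  rw [← ofReal_integral_eq_lintegral_ofReal hint hnn]
  congr 1
  rw [integral_Ico_eq_integral_Ioo, ← integral_Ioc_eq_integral_Ioo,
    ← intervalIntegral.integral_of_le hb.le]
  have hrw : ∀ x : ℝ, lrs * Real.exp (-(lrs*x)) * (Real.exp (-(lds*x)) - Real.exp (-(lds*b)))
      = lrs * Real.exp (-((lrs+lds)*x)) - (lrs * Real.exp (-(lds*b))) * Real.exp (-(lrs*x)) := by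
    intro x
    have : Real.exp (-((lrs+lds)*x)) = Real.exp (-(lrs*x)) * Real.exp (-(lds*x)) := by
      rw [← Real.exp_add]; ring_nf
    rw [this]; ring
  simp_rw [hrw]
  have hi1 : IntervalIntegrable (fun x => lrs * Real.exp (-((lrs+lds)*x))) volume 0 b :=
    (by fun_prop : Continuous fun x => lrs * Real.exp (-((lrs+lds)*x))).intervalIntegrable 0 b
  have hi2 : IntervalIntegrable (fun x => (lrs * Real.exp (-(lds*b))) * Real.exp (-(lrs*x)))
      volume 0 b :=
    (by fun_prop : Continuous fun x =>
      (lrs * Real.exp (-(lds*b))) * Real.exp (-(lrs*x))).intervalIntegrable 0 b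
  rw [intervalIntegral.integral_sub hi1 hi2, intervalIntegral.integral_const_mul,
    intervalIntegral.integral_const_mul, intExp (by positivity : lrs + lds ≠ 0) b,
    intExp hlrs.ne' b]
  have hLb : Real.exp (-((lrs+lds)*b)) = Real.exp (-(lrs*b)) * Real.exp (-(lds*b)) := by
    rw [← Real.exp_add]; ring_nf
  rw [hLb]
  field_simp
  ring
end

section
/- Let X, Y, W be independent random variables, exponentially distributed with rates λ_rs > 0, λ_ds > 0, λ̃_dr > 0 respectively. Let 0 ≤ α_s < P_s, β_s = P_s − α_s, and R > 0; set β1 = √((2^R − 1)/P_s), η1 = √((2^R − 1)/β_s), and for 0 ≤ g ≤ β1 define ζ1(g) = (−g·√α_s + √(g²·(α_s − P_s) + 2^R − 1))/√P_s. Then the destination outage probability satisfies Pr(√Y < β1, √W < ζ1(√Y), √X > η1) = e^{−λ_rs·η1²}·(1 − e^{−λ_ds·β1²}) − e^{−λ_rs·η1²}·∫₀^{β1} 2·λ_ds·g·e^{−(λ_ds·g² + λ̃_dr·ζ1(g)²)} dg. -/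
open MeasureTheory ProbabilityTheory Set

lemma my_expMeasure_Iic {r : ℝ} (hr : 0 < r) (t : ℝ) :
    expMeasure r (Iic t) = ENNReal.ofReal (if 0 ≤ t then 1 - Real.exp (-(r * t)) else 0) := by
  rw [show expMeasure r = volume.withDensity (exponentialPDF r) from rfl,
    withDensity_apply _ measurableSet_Iic]
  exact lintegral_exponentialPDF_eq_antiDeriv hr t

lemma my_expMeasure_Iio {r : ℝ} (hr : 0 < r) {t : ℝ} (ht : 0 ≤ t) :
    expMeasure r (Iio t) = ENNReal.ofReal (1 - Real.exp (-(r * t))) := by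
  rw [show expMeasure r = volume.withDensity (exponentialPDF r) from rfl,
    withDensity_apply _ measurableSet_Iio, setLIntegral_congr Iio_ae_eq_Iic,
    ← withDensity_apply _ measurableSet_Iic,
    show volume.withDensity (exponentialPDF r) = expMeasure r from rfl,
    my_expMeasure_Iic hr, if_pos ht]

lemma my_expMeasure_Ioi {r : ℝ} (hr : 0 < r) {t : ℝ} (ht : 0 ≤ t) :
    expMeasure r (Ioi t) = ENNReal.ofReal (Real.exp (-(r * t))) := by
  haveI := isProbabilityMeasure_expMeasure hr
  have he : Real.exp (-(r * t)) ≤ 1 := Real.exp_le_one_iff.2 (neg_nonpos.2 (by positivity))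
  rw [← Set.compl_Iic, measure_compl measurableSet_Iic (measure_ne_top _ _),
    my_expMeasure_Iic hr, if_pos ht, measure_univ, ← ENNReal.ofReal_one,
    ← ENNReal.ofReal_sub _ (by linarith)]
  ring_nf

/-- destination outage probability in regime R2. For independent
`X ~ exp(λ_rs)`, `Y ~ exp(λ_ds)`, `W ~ exp(λ̃_dr)`, block Markov power split
`0 ≤ α_s < P_s`, `β_s = P_s - α_s`, target rate `R > 0`, and the thresholds
`β1, η1, ζ1` as defined,
`Pr(√Y < β1, √W < ζ1(√Y), √X > η1)
  = e^{-λ_rs η1²}(1 - e^{-λ_ds β1²})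
    - e^{-λ_rs η1²} ∫₀^{β1} 2 λ_ds g e^{-(λ_ds g² + λ̃_dr ζ1(g)²)} dg`. -/
theorem destination_outage {Ω : Type*} [MeasurableSpace Ω]
    (μ : Measure Ω) [IsProbabilityMeasure μ]
    (X Y W : Ω → ℝ) (hX : Measurable X) (hY : Measurable Y) (hW : Measurable W)
    (lrs lds ldr : ℝ) (hlrs : 0 < lrs) (hlds : 0 < lds) (hldr : 0 < ldr)
    (hindep : iIndepFun ![X, Y, W] μ)
    (hXlaw : μ.map X = expMeasure lrs)
    (hYlaw : μ.map Y = expMeasure lds)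
    (hWlaw : μ.map W = expMeasure ldr)
    (αs Ps R : ℝ) (hαs : 0 ≤ αs) (hαsP : αs < Ps) (hR : 0 < R)
    (βs β1 η1 : ℝ) (ζ1 : ℝ → ℝ)
    (hβs : βs = Ps - αs)
    (hβ1 : β1 = Real.sqrt (((2 : ℝ) ^ R - 1) / Ps))
    (hη1 : η1 = Real.sqrt (((2 : ℝ) ^ R - 1) / βs))
    (hζ1 : ∀ g : ℝ, 0 ≤ g → g ≤ β1 →
      ζ1 g = (-(g * Real.sqrt αs)
        + Real.sqrt (g ^ 2 * (αs - Ps) + (2 : ℝ) ^ R - 1)) / Real.sqrt Ps) :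
    μ {ω | Real.sqrt (Y ω) < β1 ∧ Real.sqrt (W ω) < ζ1 (Real.sqrt (Y ω)) ∧
        η1 < Real.sqrt (X ω)} =
      ENNReal.ofReal (Real.exp (-(lrs * η1 ^ 2)) * (1 - Real.exp (-(lds * β1 ^ 2)))
        - Real.exp (-(lrs * η1 ^ 2))
          * ∫ g in (0 : ℝ)..β1,
              2 * lds * g * Real.exp (-(lds * g ^ 2 + ldr * (ζ1 g) ^ 2))) := by
  -- basic positivity facts
  have hPs : 0 < Ps := lt_of_le_of_lt hαs hαsP
  have hβspos : 0 < βs := by rw [hβs]; linarith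
  have hc : 0 < (2 : ℝ) ^ R - 1 := by
    have : (1 : ℝ) < 2 ^ R :=
      (Real.one_lt_rpow_iff_of_pos (by norm_num)).2 (Or.inl ⟨by norm_num, hR⟩)
    linarith
  have hβ1pos : 0 < β1 := by rw [hβ1]; exact Real.sqrt_pos.2 (div_pos hc hPs)
  have hβ1sq : β1 ^ 2 = ((2 : ℝ) ^ R - 1) / Ps := by
    rw [hβ1]; exact Real.sq_sqrt (le_of_lt (div_pos hc hPs))
  have hη1pos : 0 < η1 := by rw [hη1]; exact Real.sqrt_pos.2 (div_pos hc hβspos)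
  have hη1sq : η1 ^ 2 = ((2 : ℝ) ^ R - 1) / βs := by
    rw [hη1]; exact Real.sq_sqrt (le_of_lt (div_pos hc hβspos))
  -- the explicit threshold function
  set ζ : ℝ → ℝ := fun g =>
    (-(g * Real.sqrt αs) + Real.sqrt (g ^ 2 * (αs - Ps) + (2 : ℝ) ^ R - 1)) / Real.sqrt Ps
    with hζdef
  have hζeq : ∀ g : ℝ, 0 ≤ g → g ≤ β1 → ζ1 g = ζ g := fun g h1 h2 => hζ1 g h1 h2
  have hζcont : Continuous ζ := by
    apply Continuous.div_const
    exact ((continuous_id.mul continuous_const).neg).add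
      (((((continuous_pow 2).mul continuous_const).add continuous_const).sub
        continuous_const).sqrt)
  have hζpos : ∀ g : ℝ, 0 ≤ g → g < β1 → 0 < ζ g := by
    intro g hg0 hgβ
    have hgsq : g ^ 2 * Ps < (2 : ℝ) ^ R - 1 := by
      have h1 : g ^ 2 < β1 ^ 2 := by nlinarith
      rw [hβ1sq] at h1
      exact (lt_div_iff₀ hPs).1 h1
    have hnum : g * Real.sqrt αs < Real.sqrt (g ^ 2 * (αs - Ps) + (2 : ℝ) ^ R - 1) := by
      rw [Real.lt_sqrt (mul_nonneg hg0 (Real.sqrt_nonneg _))]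
      rw [mul_pow, Real.sq_sqrt hαs]
      nlinarith
    exact div_pos (by linarith) (Real.sqrt_pos.2 hPs)
  -- rewrite the event
  set S : Set (ℝ × ℝ) := {p | p.1 < β1 ^ 2 ∧ p.2 < (ζ (Real.sqrt p.1)) ^ 2} with hSdef
  have hScont : Continuous fun p : ℝ × ℝ => (ζ (Real.sqrt p.1)) ^ 2 :=
    (((hζcont.comp Real.continuous_sqrt).comp continuous_fst).pow 2)
  have hS : MeasurableSet S :=
    (measurableSet_lt measurable_fst measurable_const).inter
      (measurableSet_lt measurable_snd hScont.measurable)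
  have hsqY : ∀ y : ℝ, Real.sqrt y < β1 ↔ y < β1 ^ 2 := fun y => Real.sqrt_lt' hβ1pos
  have hset : {ω | Real.sqrt (Y ω) < β1 ∧ Real.sqrt (W ω) < ζ1 (Real.sqrt (Y ω)) ∧
        η1 < Real.sqrt (X ω)} =
      (fun ω => (Y ω, W ω)) ⁻¹' S ∩ X ⁻¹' Ioi (η1 ^ 2) := by
    ext ω
    simp only [mem_setOf_eq, mem_inter_iff, mem_preimage, mem_Ioi, hSdef]
    constructor
    · rintro ⟨h1, h2, h3⟩
      have hg0 : (0 : ℝ) ≤ Real.sqrt (Y ω) := Real.sqrt_nonneg _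
      have hgβ : Real.sqrt (Y ω) < β1 := h1
      have hz := hζpos _ hg0 hgβ
      rw [hζeq _ hg0 (le_of_lt hgβ)] at h2
      have hXpos : η1 ^ 2 < X ω := (Real.lt_sqrt (le_of_lt hη1pos)).1 h3
      exact ⟨⟨(hsqY _).1 h1, (Real.sqrt_lt' hz).1 h2⟩, hXpos⟩
    · rintro ⟨⟨h1, h2⟩, h3⟩
      have h1' : Real.sqrt (Y ω) < β1 := (hsqY _).2 h1
      have hg0 : (0 : ℝ) ≤ Real.sqrt (Y ω) := Real.sqrt_nonneg _
      have hz := hζpos _ hg0 h1'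
      refine ⟨h1', ?_, (Real.lt_sqrt (le_of_lt hη1pos)).2 h3⟩
      rw [hζeq _ hg0 (le_of_lt h1')]
      exact (Real.sqrt_lt' hz).2 h2
  -- independence
  have hYWX : IndepFun (fun ω => (Y ω, W ω)) X μ := by
    have := hindep.indepFun_prodMk
      (fun i => by fin_cases i <;> simpa) 1 2 0 (by decide) (by decide)
    simpa using this
  have hYW : IndepFun Y W μ := by
    have := hindep.indepFun (show (1 : Fin 3) ≠ 2 by decide)
    simpa using this
  rw [hset, hYWX.measure_inter_preimage_eq_mul S (Ioi (η1 ^ 2)) hS measurableSet_Ioi]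
  -- the X factor
  have hXfac : μ (X ⁻¹' Ioi (η1 ^ 2)) = ENNReal.ofReal (Real.exp (-(lrs * η1 ^ 2))) := by
    rw [← Measure.map_apply hX measurableSet_Ioi, hXlaw,
      my_expMeasure_Ioi hlrs (sq_nonneg η1)]
  -- the (Y, W) factor
  haveI := isProbabilityMeasure_expMeasure hlds
  haveI := isProbabilityMeasure_expMeasure hldr
  have hmap : μ.map (fun ω => (Y ω, W ω)) = (expMeasure lds).prod (expMeasure ldr) := by
    rw [← hYlaw, ← hWlaw]
    exact (indepFun_iff_map_prod_eq_prod_map_map hY.aemeasurable hW.aemeasurable).1 hYW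
  have hpre : μ ((fun ω => (Y ω, W ω)) ⁻¹' S) = ((expMeasure lds).prod (expMeasure ldr)) S := by
    rw [← Measure.map_apply (hY.prodMk hW) hS, hmap]
  -- inner function
  set h : ℝ → ℝ := fun y => 1 - Real.exp (-(ldr * (ζ (Real.sqrt y)) ^ 2)) with hhdef
  have hh0 : ∀ y, 0 ≤ h y := by
    intro y
    have : Real.exp (-(ldr * (ζ (Real.sqrt y)) ^ 2)) ≤ 1 :=
      Real.exp_le_one_iff.2 (neg_nonpos.2 (by positivity))
    simp only [hhdef]; linarith
  have hhcont : Continuous h :=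
    continuous_const.sub ((continuous_const.mul ((hζcont.comp Real.continuous_sqrt).pow 2)).neg.rexp)
  have hslice : ∀ y : ℝ, (expMeasure ldr) (Prod.mk y ⁻¹' S) =
      Set.indicator (Iio (β1 ^ 2)) (fun y => ENNReal.ofReal (h y)) y := by
    intro y
    by_cases hy : y < β1 ^ 2
    · have : Prod.mk y ⁻¹' S = Iio ((ζ (Real.sqrt y)) ^ 2) := by
        ext w; simp [hSdef, hy]
      rw [this, my_expMeasure_Iio hldr (sq_nonneg _), Set.indicator_of_mem (show y ∈ Iio (β1 ^ 2) from hy)]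
    · have : Prod.mk y ⁻¹' S = (∅ : Set ℝ) := by
        ext w; simp [hSdef, hy]
      rw [this, measure_empty, Set.indicator_of_notMem (show y ∉ Iio (β1 ^ 2) from hy)]
  have hprodS : ((expMeasure lds).prod (expMeasure ldr)) S =
      ∫⁻ y in Iio (β1 ^ 2), ENNReal.ofReal (h y) ∂(expMeasure lds) := by
    rw [Measure.prod_apply hS]
    simp_rw [hslice]
    rw [lintegral_indicator measurableSet_Iio]
  -- move to Lebesgue measure
  have hpdfmeas : Measurable (exponentialPDF lds) :=
    (measurable_exponentialPDFReal lds).ennreal_ofReal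
  have hlds_withD : ∫⁻ y in Iio (β1 ^ 2), ENNReal.ofReal (h y) ∂(expMeasure lds) =
      ∫⁻ y in Iio (β1 ^ 2), exponentialPDF lds y * ENNReal.ofReal (h y) ∂volume := by
    rw [show expMeasure lds = volume.withDensity (exponentialPDF lds) from rfl,
      restrict_withDensity measurableSet_Iio,
      lintegral_withDensity_eq_lintegral_mul _ hpdfmeas]
    · rfl
    · exact (measurable_const.sub
        ((continuous_const.mul ((hζcont.comp Real.continuous_sqrt).pow 2)).neg.rexp).measurable).ennreal_ofReal
  -- split off the negative part
  have hsplit : Iio (β1 ^ 2) = Iio (0 : ℝ) ∪ Ico (0 : ℝ) (β1 ^ 2) := by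
    ext y
    simp only [mem_Iio, mem_union, mem_Ico]
    constructor
    · intro hy; by_cases h0 : y < 0
      · exact Or.inl h0
      · exact Or.inr ⟨le_of_not_gt h0, hy⟩
    · rintro (hy | ⟨_, hy⟩)
      · exact lt_trans hy (by positivity)
      · exact hy
  set F : ℝ → ℝ := fun y => lds * Real.exp (-(lds * y)) * h y with hFdef
  have hFcont : Continuous F := (continuous_const.mul
    (((continuous_const.mul continuous_id).neg).rexp)).mul hhcont
  have hF0 : ∀ y, 0 ≤ F y := fun y =>
    mul_nonneg (mul_nonneg (le_of_lt hlds) (Real.exp_nonneg _)) (hh0 y)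
  have hIco : ∫⁻ y in Iio (β1 ^ 2), exponentialPDF lds y * ENNReal.ofReal (h y) ∂volume =
      ENNReal.ofReal (∫ y in (0 : ℝ)..(β1 ^ 2), F y) := by
    have hdisj : Disjoint (Iio (0 : ℝ)) (Ico (0 : ℝ) (β1 ^ 2)) := by
      apply Set.disjoint_left.mpr
      rintro x (hx : x < 0) ⟨hx', _⟩
      linarith
    have hu := lintegral_union (μ := volume)
      (f := fun y => exponentialPDF lds y * ENNReal.ofReal (h y))
      (A := Iio (0 : ℝ)) (B := Ico (0 : ℝ) (β1 ^ 2)) measurableSet_Ico hdisj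
    rw [hsplit, hu]
    have hz : ∫⁻ y in Iio (0 : ℝ), exponentialPDF lds y * ENNReal.ofReal (h y) ∂volume = 0 := by
      rw [setLIntegral_congr_fun measurableSet_Iio
        (fun y (hy : y < (0 : ℝ)) => by rw [exponentialPDF_of_neg hy, zero_mul])]
      simp
    rw [hz, zero_add]
    have heq : ∫⁻ y in Ico (0 : ℝ) (β1 ^ 2), exponentialPDF lds y * ENNReal.ofReal (h y) ∂volume =
        ∫⁻ y in Ico (0 : ℝ) (β1 ^ 2), ENNReal.ofReal (F y) ∂volume := by
      apply setLIntegral_congr_fun measurableSet_Ico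
      intro y hy
      dsimp only
      rw [exponentialPDF_of_nonneg hy.1, ← ENNReal.ofReal_mul (by positivity)]
    rw [heq, ← ofReal_integral_eq_lintegral_ofReal
      ((hFcont.integrableOn_Icc).mono_set Ico_subset_Icc_self)
      (ae_of_all _ hF0)]
    congr 1
    rw [MeasureTheory.integral_Ico_eq_integral_Ioo, ← MeasureTheory.integral_Ioc_eq_integral_Ioo,
      ← intervalIntegral.integral_of_le (by positivity)]
  -- the real integral identity
  have hA : ∫ y in (0 : ℝ)..(β1 ^ 2), lds * Real.exp (-(lds * y)) = 1 - Real.exp (-(lds * β1 ^ 2)) := by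
    have := intervalIntegral.integral_eq_sub_of_hasDerivAt
      (f := fun y => -Real.exp (-(lds * y))) (a := (0 : ℝ)) (b := β1 ^ 2)
      (fun x _ => hasDerivAt_neg_exp_mul_exp)
      (((continuous_const.mul (((continuous_const.mul continuous_id).neg).rexp))).intervalIntegrable _ _)
    rw [this]
    simp only [mul_zero, neg_zero, Real.exp_zero]
    ring
  have hB : ∫ y in (0 : ℝ)..(β1 ^ 2),
      lds * Real.exp (-(lds * y)) * Real.exp (-(ldr * (ζ (Real.sqrt y)) ^ 2)) =
      ∫ g in (0 : ℝ)..β1, 2 * lds * g * Real.exp (-(lds * g ^ 2 + ldr * (ζ1 g) ^ 2)) := by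
    have hgc : Continuous fun y =>
        lds * Real.exp (-(lds * y)) * Real.exp (-(ldr * (ζ (Real.sqrt y)) ^ 2)) :=
      (continuous_const.mul (((continuous_const.mul continuous_id).neg).rexp)).mul
        ((continuous_const.mul ((hζcont.comp Real.continuous_sqrt).pow 2)).neg.rexp)
    have hsub := intervalIntegral.integral_comp_smul_deriv
      (f := fun g : ℝ => g ^ 2) (f' := fun g : ℝ => 2 * g)
      (a := (0 : ℝ)) (b := β1)
      (fun x _ => by simpa using (hasDerivAt_pow 2 x))
      ((continuous_const.mul continuous_id).continuousOn)
      hgc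
    simp only [Function.comp] at hsub
    rw [show ((0 : ℝ) ^ 2) = (0 : ℝ) by norm_num] at hsub
    rw [← hsub]
    apply intervalIntegral.integral_congr
    intro x hx
    rw [Set.uIcc_of_le (le_of_lt hβ1pos)] at hx
    have hx0 : 0 ≤ x := hx.1
    have hxβ : x ≤ β1 := hx.2
    simp only [smul_eq_mul]
    rw [Real.sqrt_sq hx0, hζeq x hx0 hxβ]
    rw [show -(lds * x ^ 2 + ldr * (ζ x) ^ 2) = -(lds * x ^ 2) + -(ldr * (ζ x) ^ 2) by ring,
      Real.exp_add]
    ring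
  have hIreal : ∫ y in (0 : ℝ)..(β1 ^ 2), F y =
      (1 - Real.exp (-(lds * β1 ^ 2))) -
        ∫ g in (0 : ℝ)..β1, 2 * lds * g * Real.exp (-(lds * g ^ 2 + ldr * (ζ1 g) ^ 2)) := by
    have hFsplit : ∀ y, F y = lds * Real.exp (-(lds * y)) -
        lds * Real.exp (-(lds * y)) * Real.exp (-(ldr * (ζ (Real.sqrt y)) ^ 2)) := by
      intro y; simp only [hFdef, hhdef]; ring
    rw [intervalIntegral.integral_congr (fun y _ => hFsplit y)]
    rw [intervalIntegral.integral_sub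
      (f := fun y => lds * Real.exp (-(lds * y)))
      (g := fun y => lds * Real.exp (-(lds * y)) * Real.exp (-(ldr * (ζ (Real.sqrt y)) ^ 2)))
      ((continuous_const.mul (((continuous_const.mul continuous_id).neg).rexp)).intervalIntegrable _ _)
      (((continuous_const.mul (((continuous_const.mul continuous_id).neg).rexp)).mul
        ((continuous_const.mul ((hζcont.comp Real.continuous_sqrt).pow 2)).neg.rexp)).intervalIntegrable _ _)]
    rw [hA, hB]
  -- assemble
  rw [hXfac, hpre, hprodS, hlds_withD, hIco, hIreal]
  have hInonneg : (0 : ℝ) ≤ (1 - Real.exp (-(lds * β1 ^ 2))) -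
      ∫ g in (0 : ℝ)..β1, 2 * lds * g * Real.exp (-(lds * g ^ 2 + ldr * (ζ1 g) ^ 2)) := by
    rw [← hIreal]
    exact intervalIntegral.integral_nonneg (by positivity) (fun y _ => hF0 y)
  rw [← ENNReal.ofReal_mul hInonneg]
  congr 1
  ring
end

section
/- Fix λ_rs, λ_ds > 0 and a target rate R > 0, and for P > 0 define P_dt(P) = 1 − e^{−λ_ds·(2^R − 1)/P} − (λ_ds/(λ_rs + λ_ds))·(1 − e^{−(λ_rs + λ_ds)·(2^R − 1)/P}). Then lim_{P → ∞} P²·P_dt(P) = λ_ds·λ_rs·(2^R − 1)²/2; in particular the direct-transmission outage probability decays like 1/P² at high SNR, i.e. achieves diversity order 2. -/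
open Filter Real

lemma htend : Filter.Tendsto (fun t : ℝ => (Real.exp t - 1 - t) / t ^ 2)
    (nhdsWithin 0 {0}ᶜ) (nhds (1/2)) := by
  have h0 : Filter.Tendsto (fun t : ℝ => (Real.exp t - 1 - t) / t ^ 2 - 1/2)
      (nhdsWithin 0 {0}ᶜ) (nhds 0) := by
    have hball : ∀ᶠ t : ℝ in nhdsWithin 0 {0}ᶜ, |t| ≤ 1 := by
      apply eventually_nhdsWithin_of_eventually_nhds
      filter_upwards [Metric.ball_mem_nhds (0:ℝ) one_pos] with t ht
      simp only [Metric.mem_ball, Real.dist_eq, sub_zero] at ht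
      exact le_of_lt ht
    apply squeeze_zero_norm' (a := fun t : ℝ => |t| * (2/9))
    · filter_upwards [self_mem_nhdsWithin, hball] with t ht ht1
      have htne : t ≠ 0 := ht
      have ht2 : (0:ℝ) < t ^ 2 := by positivity
      have hb := Real.exp_bound ht1 (by norm_num : 0 < 3)
      have hsum : ∑ i ∈ Finset.range 3, t ^ i / (Nat.factorial i : ℝ)
          = 1 + t + t^2/2 := by
        simp [Finset.sum_range_succ, Nat.factorial]
      rw [hsum] at hb
      have heq : (Real.exp t - 1 - t) / t ^ 2 - 1/2
          = (Real.exp t - (1 + t + t^2/2)) / t ^ 2 := by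
        field_simp
        ring
      rw [Real.norm_eq_abs, heq, abs_div, abs_of_pos ht2]
      rw [div_le_iff₀ ht2]
      calc |Real.exp t - (1 + t + t^2/2)| ≤ |t|^3 * ((3+1)/(Nat.factorial 3 * 3)) := by
              exact_mod_cast hb
        _ = |t| * (2/9) * t^2 := by
              norm_num [Nat.factorial]
              rw [← sq_abs t]; ring
    · have : Filter.Tendsto (fun t : ℝ => |t| * (2/9)) (nhds 0) (nhds (|0| * (2/9))) :=
        (continuous_abs.tendsto 0).mul_const _
      simpa using this.mono_left nhdsWithin_le_nhds
  have := h0.add (tendsto_const_nhds (x := (1/2 : ℝ)) (f := nhdsWithin 0 {0}ᶜ))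
  simpa using this

/-- the direct-transmission outage probability
`P_dt(P) = 1 - e^{-λ_ds (2^R - 1)/P} - (λ_ds/(λ_rs+λ_ds))(1 - e^{-(λ_rs+λ_ds)(2^R - 1)/P})`
satisfies `P² P_dt(P) → λ_ds λ_rs (2^R - 1)²/2` as `P → ∞`: diversity order 2. -/
theorem direct_transmission_diversity_order_two (lrs lds R : ℝ)
    (hlrs : 0 < lrs) (hlds : 0 < lds) (hR : 0 < R) :
    Filter.Tendsto
      (fun P : ℝ => P ^ 2 *
        (1 - Real.exp (-(lds * ((2 : ℝ) ^ R - 1) / P))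
          - lds / (lrs + lds) * (1 - Real.exp (-((lrs + lds) * ((2 : ℝ) ^ R - 1) / P)))))
      Filter.atTop
      (nhds (lds * lrs * ((2 : ℝ) ^ R - 1) ^ 2 / 2)) := by
  set K : ℝ := (2 : ℝ) ^ R - 1 with hKdef
  have hK : 0 < K := by
    have : (1:ℝ) < (2:ℝ) ^ R := Real.one_lt_rpow_iff_of_pos two_pos |>.2 (Or.inl ⟨one_lt_two, hR⟩)
    simpa [hKdef] using sub_pos.2 this
  set a : ℝ := lds * K with hadef
  set b : ℝ := (lrs + lds) * K with hbdef
  have ha : 0 < a := by positivity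
  have hb : 0 < b := by positivity
  have hsum : lrs + lds ≠ 0 := by positivity
  have tend : ∀ c : ℝ, 0 < c →
      Filter.Tendsto (fun P : ℝ => -c / P) Filter.atTop (nhdsWithin 0 {0}ᶜ) := by
    intro c hc
    rw [tendsto_nhdsWithin_iff]
    constructor
    · exact tendsto_const_nhds.div_atTop tendsto_id
    · filter_upwards [eventually_gt_atTop (0:ℝ)] with P hP
      simp only [Set.mem_compl_iff, Set.mem_singleton_iff]
      exact div_ne_zero (neg_ne_zero.2 hc.ne') hP.ne'
  have hA := htend.comp (tend a ha)
  have hB := htend.comp (tend b hb)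
  have hmain := ((hA.const_mul (-a^2)).add (hB.const_mul (a*b)))
  have hval : -a^2 * (1/2) + a*b * (1/2) = lds * lrs * K ^ 2 / 2 := by
    simp only [hadef, hbdef]; ring
  rw [hval] at hmain
  refine hmain.congr' ?_
  filter_upwards [eventually_gt_atTop (0:ℝ)] with P hP
  have hPne : P ≠ 0 := hP.ne'
  simp only [Function.comp]
  have e1 : -(lds * K / P) = -a / P := by rw [hadef]; ring
  have e2 : -((lrs + lds) * K / P) = -b / P := by rw [hbdef]; ring
  rw [show (-a/P) = -(a/P) by ring, show (-b/P) = -(b/P) by ring] at *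
  rw [← e1, ← e2] at *
  set E1 := Real.exp (-(lds * K / P))
  set E2 := Real.exp (-((lrs + lds) * K / P))
  simp only [hadef, hbdef]
  field_simp
  ring
end

section
/- Fix λ_rs, λ_ds > 0, a target rate R > 0, and a fraction b ∈ (0, 1], and for P > 0 define P_relay(P) = 1 − e^{−λ_rs·(2^R − 1)/(b·P)} − (λ_rs/(λ_rs + λ_ds))·(1 − e^{−(λ_rs + λ_ds)·(2^R − 1)/(b·P)}). Then lim_{P → ∞} P²·P_relay(P) = λ_ds·λ_rs·(2^R − 1)²/(2·b²); in particular the relay outage probability decays like 1/P² at high SNR, i.e. achieves diversity order 2. -/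
open Filter Real

private lemma lemA (k : ℝ) :
    Tendsto (fun P : ℝ => P ^ 2 * (Real.exp (-(k / P)) - 1 + k / P - k ^ 2 / (2 * P ^ 2)))
      atTop (nhds 0) := by
  have hg : Tendsto (fun P : ℝ => (2 / 9) * |k| ^ 3 / P) atTop (nhds 0) :=
    Tendsto.div_atTop tendsto_const_nhds tendsto_id
  apply squeeze_zero_norm' _ hg
  filter_upwards [eventually_ge_atTop (max 1 |k|)] with P hP
  have hP1 : (1 : ℝ) ≤ P := le_trans (le_max_left _ _) hP
  have hPk : |k| ≤ P := le_trans (le_max_right _ _) hP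
  have hP0 : 0 < P := lt_of_lt_of_le one_pos hP1
  have hx : |(-(k / P))| ≤ 1 := by
    rw [abs_neg, abs_div, abs_of_pos hP0, div_le_one hP0]
    exact hPk
  have hb := Real.exp_bound hx (n := 3) (by norm_num)
  have hsum : ∑ m ∈ Finset.range 3, (-(k / P)) ^ m / m.factorial
      = 1 - k / P + k ^ 2 / (2 * P ^ 2) := by
    simp [Finset.sum_range_succ, Nat.factorial]
    ring
  rw [hsum] at hb
  have heq : Real.exp (-(k / P)) - 1 + k / P - k ^ 2 / (2 * P ^ 2)
      = Real.exp (-(k / P)) - (1 - k / P + k ^ 2 / (2 * P ^ 2)) := by ring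
  rw [Real.norm_eq_abs, abs_mul, abs_of_nonneg (by positivity : (0:ℝ) ≤ P ^ 2), heq]
  calc P ^ 2 * |Real.exp (-(k / P)) - (1 - k / P + k ^ 2 / (2 * P ^ 2))|
      ≤ P ^ 2 * (|(-(k / P))| ^ 3 * ((3:ℕ).succ / ((3:ℕ).factorial * 3))) := by
        exact mul_le_mul_of_nonneg_left hb (by positivity)
    _ = 2 / 9 * |k| ^ 3 / P := by
        rw [abs_neg, abs_div, abs_of_pos hP0]
        field_simp [Nat.factorial]
        ring

/-- the relay outage probability
`P_relay(P) = 1 - e^{-λ_rs (2^R - 1)/(bP)} - (λ_rs/(λ_rs+λ_ds))(1 - e^{-(λ_rs+λ_ds)(2^R - 1)/(bP)})`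
with `β_s = bP`, `b ∈ (0, 1]`, satisfies
`P² P_relay(P) → λ_ds λ_rs (2^R - 1)²/(2 b²)` as `P → ∞`: diversity order 2. -/
theorem relay_diversity_order_two (lrs lds R b : ℝ)
    (hlrs : 0 < lrs) (hlds : 0 < lds) (hR : 0 < R) (hb : 0 < b) (hb1 : b ≤ 1) :
    Filter.Tendsto
      (fun P : ℝ => P ^ 2 *
        (1 - Real.exp (-(lrs * ((2 : ℝ) ^ R - 1) / (b * P)))
          - lrs / (lrs + lds)
            * (1 - Real.exp (-((lrs + lds) * ((2 : ℝ) ^ R - 1) / (b * P))))))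
      Filter.atTop
      (nhds (lds * lrs * ((2 : ℝ) ^ R - 1) ^ 2 / (2 * b ^ 2))) := by
  set t : ℝ := (2 : ℝ) ^ R - 1 with ht
  set a : ℝ := lrs * t / b with ha
  set d : ℝ := (lrs + lds) * t / b with hd
  set c : ℝ := lrs / (lrs + lds) with hc
  set K : ℝ := lds * lrs * t ^ 2 / (2 * b ^ 2) with hK
  have h1 := lemA a
  have h2 := lemA d
  have hsum : lrs + lds ≠ 0 := by positivity
  have hcomb :
      Tendsto (fun P : ℝ =>
        -(P ^ 2 * (Real.exp (-(a / P)) - 1 + a / P - a ^ 2 / (2 * P ^ 2)))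
        + c * (P ^ 2 * (Real.exp (-(d / P)) - 1 + d / P - d ^ 2 / (2 * P ^ 2))) + K)
        atTop (nhds (-0 + c * 0 + K)) :=
    ((h1.neg).add (h2.const_mul c)).add_const K
  rw [show -0 + c * 0 + K = K by ring] at hcomb
  apply hcomb.congr'
  filter_upwards [eventually_gt_atTop (0 : ℝ)] with P hP
  have hP0 : P ≠ 0 := ne_of_gt hP
  have hb0 : b ≠ 0 := ne_of_gt hb
  have e1 : a / P = lrs * t / (b * P) := by rw [ha]; field_simp
  have e2 : d / P = (lrs + lds) * t / (b * P) := by rw [hd]; field_simp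
  rw [e1, e2, ha, hd, hc, hK]
  field_simp
  ring
end

section
/- Let X, Y, Z be independent random variables, exponentially distributed with rates λ_rs > 0, λ_ds > 0, λ_dr > 0 respectively, and let P_s, P_r > 0. Then the expected relay power savings with perfect CSI satisfies E[(P_r − ((X − Y)/Z)·P_s)·1{Y < X ≤ Y + (P_r/P_s)·Z}] = λ_ds·λ_dr·( P_s·(ln(λ_dr) − ln((P_r/P_s)·λ_rs + λ_dr)) + P_r·λ_rs/λ_dr )/(λ_rs·(λ_rs + λ_ds)), where ln is the natural logarithm. -/
open MeasureTheory ProbabilityTheory Real Set Filter Topology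
open scoped ENNReal NNReal

lemma aux_integral_exp_rate {a : ℝ} (ha : 0 < a) :
    ∫ z in Ioi (0:ℝ), Real.exp (-(a*z)) = 1/a := by
  have hd : ∀ x ∈ Ioi (0:ℝ), HasDerivAt (fun z => -Real.exp (-(a*z))/a) (Real.exp (-(a*x))) x := by
    intro x _
    have := (ProbabilityTheory.hasDerivAt_neg_exp_mul_exp (r := a) (x := x)).div_const a
    simpa [mul_div_assoc, mul_div_cancel_left₀ _ ha.ne'] using this
  have hint : IntegrableOn (fun z => Real.exp (-(a*z))) (Ioi (0:ℝ)) := by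
    simpa [neg_mul] using exp_neg_integrableOn_Ioi 0 ha
  have htend : Tendsto (fun z => -Real.exp (-(a*z))/a) atTop (𝓝 (-0/a)) := by
    refine Tendsto.div_const (Tendsto.neg ?_) _
    have h1 : Tendsto (fun z : ℝ => -(a*z)) atTop atBot :=
      tendsto_neg_atTop_atBot.comp (tendsto_id.const_mul_atTop ha)
    exact tendsto_exp_atBot.comp h1
  have hcont : ContinuousWithinAt (fun z => -Real.exp (-(a*z))/a) (Ici (0:ℝ)) 0 :=
    (Continuous.continuousWithinAt (by continuity))
  have := integral_Ioi_of_hasDerivAt_of_tendsto hcont hd hint htend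
  rw [this]; simp [div_eq_mul_inv]

lemma aux_exp_integrableOn {a : ℝ} (ha : 0 < a) :
    IntegrableOn (fun z => Real.exp (-(a*z))) (Ioi (0:ℝ)) := by
  simpa [neg_mul] using exp_neg_integrableOn_Ioi 0 ha

lemma aux_exponentialPDFReal_def (r x : ℝ) :
    exponentialPDFReal r x = if 0 ≤ x then r * Real.exp (-(r*x)) else 0 := by
  rw [exponentialPDFReal, gammaPDFReal]
  simp only [rpow_one, Real.Gamma_one, div_one, sub_self, rpow_zero, mul_one]

lemma aux_integral_expMeasure {r : ℝ} (hr : 0 < r) (f : ℝ → ℝ) :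
    ∫ x, f x ∂(expMeasure r) = ∫ x in Ioi (0:ℝ), (r * Real.exp (-(r*x))) * f x := by
  have h1 : expMeasure r
      = volume.withDensity (fun x => ((Real.toNNReal (exponentialPDFReal r x) : ℝ≥0) : ℝ≥0∞)) :=
    rfl
  rw [h1, integral_withDensity_eq_integral_smul ((measurable_exponentialPDFReal r).real_toNNReal)]
  have h2 : ∀ x : ℝ, (Real.toNNReal (exponentialPDFReal r x) : ℝ≥0) • f x
      = Set.indicator (Ici (0:ℝ)) (fun x => (r * Real.exp (-(r*x))) * f x) x := by
    intro x
    rw [NNReal.smul_def, smul_eq_mul, Real.coe_toNNReal _ (exponentialPDFReal_nonneg hr x),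
      aux_exponentialPDFReal_def]
    by_cases hx : 0 ≤ x
    · rw [if_pos hx, Set.indicator_of_mem (Set.mem_Ici.2 hx)]
    · rw [if_neg hx, Set.indicator_of_notMem (fun h => hx (Set.mem_Ici.1 h)), zero_mul]
  simp_rw [h2]
  rw [integral_indicator measurableSet_Ici, integral_Ici_eq_integral_Ioi]

lemma aux_frullani_key {a c z : ℝ} (hac : a ≤ c) (hz : 0 < z) :
    (Real.exp (-(a*z)) - Real.exp (-(c*z)))/z = ∫ s in Ioc a c, Real.exp (-(s*z)) := by
  rw [← intervalIntegral.integral_of_le hac]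
  have hd : ∀ s ∈ uIcc a c, HasDerivAt (fun s => -Real.exp (-(z*s))/z) (Real.exp (-(s*z))) s := by
    intro s _
    have := (ProbabilityTheory.hasDerivAt_neg_exp_mul_exp (r := z) (x := s)).div_const z
    simpa [mul_div_assoc, mul_div_cancel_left₀ _ hz.ne', mul_comm] using this
  rw [intervalIntegral.integral_eq_sub_of_hasDerivAt hd
    (Continuous.intervalIntegrable (by fun_prop) a c)]
  rw [mul_comm z c, mul_comm z a]
  ring

lemma aux_frullani_integrand_nonneg {a c z : ℝ} (hac : a ≤ c) (hz : 0 < z) :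
    0 ≤ (Real.exp (-(a*z)) - Real.exp (-(c*z)))/z := by
  apply div_nonneg _ hz.le
  have : -(c*z) ≤ -(a*z) := by nlinarith
  linarith [Real.exp_le_exp.2 this]

lemma aux_frullani_integrable {a c : ℝ} (ha : 0 < a) (hac : a ≤ c) :
    IntegrableOn (fun z => (Real.exp (-(a*z)) - Real.exp (-(c*z)))/z) (Ioi (0:ℝ)) := by
  have hmeas : Measurable (fun z : ℝ => (Real.exp (-(a*z)) - Real.exp (-(c*z)))/z) := by fun_prop
  refine Integrable.mono' ((aux_exp_integrableOn ha).const_mul (c - a))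
    hmeas.aestronglyMeasurable ?_
  rw [ae_restrict_iff' measurableSet_Ioi]
  refine ae_of_all _ fun z hz => ?_
  have hz : (0:ℝ) < z := hz
  rw [Real.norm_eq_abs, abs_of_nonneg (aux_frullani_integrand_nonneg hac hz)]
  rw [div_le_iff₀ hz]
  have h1 : Real.exp (-(c*z)) = Real.exp (-(a*z)) * Real.exp (-((c-a)*z)) := by
    rw [← Real.exp_add]; ring_nf
  have h2 : 1 - (c-a)*z ≤ Real.exp (-((c-a)*z)) := by
    have := Real.add_one_le_exp (-((c-a)*z)); linarith
  have h3 : Real.exp (-(a*z)) ≤ 1 := Real.exp_le_one_iff.2 (by nlinarith)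
  have h4 := Real.exp_pos (-(a*z))
  nlinarith [Real.exp_pos (-((c-a)*z))]

lemma aux_frullani {a c : ℝ} (ha : 0 < a) (hac : a ≤ c) :
    ∫ z in Ioi (0:ℝ), (Real.exp (-(a*z)) - Real.exp (-(c*z)))/z
      = Real.log c - Real.log a := by
  have hc : 0 < c := lt_of_lt_of_le ha hac
  set f : ℝ → ℝ := fun z => (Real.exp (-(a*z)) - Real.exp (-(c*z)))/z with hf
  have hmeas : Measurable f := by fun_prop
  have hnn : 0 ≤ᵐ[volume.restrict (Ioi (0:ℝ))] f := by
    filter_upwards [ae_restrict_mem measurableSet_Ioi] with z hz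
    exact aux_frullani_integrand_nonneg hac hz
  rw [integral_eq_lintegral_of_nonneg_ae hnn hmeas.aestronglyMeasurable.restrict]
  have key : ∫⁻ z in Ioi (0:ℝ), ENNReal.ofReal (f z)
      = ENNReal.ofReal (Real.log c - Real.log a) := by
    have step1 : ∫⁻ z in Ioi (0:ℝ), ENNReal.ofReal (f z)
        = ∫⁻ z in Ioi (0:ℝ), ∫⁻ s in Ioc a c, ENNReal.ofReal (Real.exp (-(s*z))) := by
      refine setLIntegral_congr_fun measurableSet_Ioi (fun z hz => ?_)
      have hz : (0:ℝ) < z := hz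
      rw [hf]
      simp only
      rw [aux_frullani_key hac hz,
        ofReal_integral_eq_lintegral_ofReal ?_ (ae_of_all _ fun s => (Real.exp_pos _).le)]
      exact (Continuous.integrableOn_Ioc (by fun_prop))
    rw [step1, lintegral_lintegral_swap (by fun_prop)]
    have step2 : ∫⁻ s in Ioc a c, ∫⁻ z in Ioi (0:ℝ), ENNReal.ofReal (Real.exp (-(s*z)))
        = ∫⁻ s in Ioc a c, ENNReal.ofReal (1/s) := by
      refine setLIntegral_congr_fun measurableSet_Ioc (fun s hs => ?_)
      have hs0 : 0 < s := lt_of_lt_of_le ha hs.1.le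
      rw [← ofReal_integral_eq_lintegral_ofReal (aux_exp_integrableOn hs0)
        (ae_of_all _ fun z => (Real.exp_pos _).le), aux_integral_exp_rate hs0]
    rw [step2, ← ofReal_integral_eq_lintegral_ofReal ?_ ?_]
    · congr 1
      rw [← intervalIntegral.integral_of_le hac, integral_one_div (by
        intro h
        rcases Set.mem_uIcc.1 h with ⟨h1, _⟩ | ⟨_, h2⟩ <;> linarith)]
      rw [Real.log_div hc.ne' ha.ne']
    · refine Integrable.mono' (integrable_const (1/a)) (by fun_prop) ?_
      rw [ae_restrict_iff' measurableSet_Ioc]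
      refine ae_of_all _ fun s hs => ?_
      have hs0 : 0 < s := lt_of_lt_of_le ha hs.1.le
      rw [Real.norm_eq_abs, abs_of_nonneg (by positivity)]
      exact one_div_le_one_div_of_le ha hs.1.le
    · filter_upwards [ae_restrict_mem measurableSet_Ioc] with s hs
      have hs0 : 0 < s := lt_of_lt_of_le ha hs.1.le
      positivity
  rw [key, ENNReal.toReal_ofReal]
  have := Real.log_le_log ha hac
  linarith

lemma aux_inner {lrs Ps Pr c y z : ℝ} (hlrs : 0 < lrs)
    (hz : 0 < z) (hy : 0 < y) (hc : 0 < c) (hPc : c * Ps = Pr) :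
    ∫ x in Ioi (0:ℝ), (lrs * Real.exp (-(lrs*x))) *
      (Set.indicator (Ioc y (y + c*z)) (fun x => Pr - ((x - y)/z)*Ps) x)
    = Real.exp (-(lrs*y)) * (Pr - Ps/(lrs*z) * (1 - Real.exp (-(lrs*(c*z))))) := by
  have hycz : y ≤ y + c*z := by nlinarith
  have hsub : Ioc y (y+c*z) ⊆ Ioi (0:ℝ) := fun x hx => lt_trans hy hx.1
  have e1 : ∀ x : ℝ, (lrs * Real.exp (-(lrs*x))) *
      (Set.indicator (Ioc y (y+c*z)) (fun x => Pr - ((x - y)/z)*Ps) x)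
      = Set.indicator (Ioc y (y+c*z))
        (fun x => (lrs * Real.exp (-(lrs*x))) * (Pr - ((x - y)/z)*Ps)) x := by
    intro x; by_cases hx : x ∈ Ioc y (y+c*z) <;> simp [hx]
  simp_rw [e1]
  rw [setIntegral_indicator measurableSet_Ioc, Set.inter_eq_self_of_subset_right hsub,
    ← intervalIntegral.integral_of_le hycz]
  have hd : ∀ x ∈ uIcc y (y+c*z), HasDerivAt
      (fun x => (-((Pr + (y/z)*Ps) + (-(Ps/z))*x) - (-(Ps/z))/lrs) * Real.exp (-(lrs*x)))
      ((lrs * Real.exp (-(lrs*x))) * (Pr - ((x - y)/z)*Ps)) x := by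
    intro x _
    have h1 : HasDerivAt (fun x : ℝ => -((Pr + (y/z)*Ps) + (-(Ps/z))*x) - (-(Ps/z))/lrs)
        (-(-(Ps/z))) x := by
      simpa using ((((hasDerivAt_id x).const_mul (-(Ps/z))).const_add
        (Pr + (y/z)*Ps)).neg.sub_const ((-(Ps/z))/lrs))
    have h2 : HasDerivAt (fun x : ℝ => Real.exp (-(lrs*x))) (Real.exp (-(lrs*x)) * (-lrs)) x := by
      simpa using (((hasDerivAt_id x).const_mul lrs).neg.exp)
    refine (h1.mul h2).congr_deriv ?_
    field_simp
    ring
  rw [intervalIntegral.integral_eq_sub_of_hasDerivAt hd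
    (Continuous.intervalIntegrable (by fun_prop) _ _)]
  have hexp : Real.exp (-(lrs*(y+c*z))) = Real.exp (-(lrs*y)) * Real.exp (-(lrs*(c*z))) := by
    rw [← Real.exp_add]; ring_nf
  rw [hexp, ← hPc]
  field_simp
  ring

lemma aux_middle {a b D : ℝ} (ha : 0 < a) (hb : 0 < b) :
    ∫ y in Ioi (0:ℝ), (a * Real.exp (-(a*y))) * (Real.exp (-(b*y)) * D)
      = a/(a+b) * D := by
  have e1 : ∀ y : ℝ, (a * Real.exp (-(a*y))) * (Real.exp (-(b*y)) * D)
      = (a*D) * Real.exp (-((a+b)*y)) := by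
    intro y
    rw [show -((a+b)*y) = -(a*y) + -(b*y) by ring, Real.exp_add]; ring
  simp_rw [e1]
  rw [integral_const_mul, aux_integral_exp_rate (by positivity)]
  field_simp

/-- expected relay power savings with perfect CSI. For independent
`X ~ exp(λ_rs)`, `Y ~ exp(λ_ds)`, `Z ~ exp(λ_dr)` and powers `P_s, P_r > 0`,
`E[(P_r - ((X - Y)/Z) P_s) 1{Y < X ≤ Y + (P_r/P_s) Z}]
  = λ_ds λ_dr (P_s (ln λ_dr - ln((P_r/P_s) λ_rs + λ_dr)) + P_r λ_rs/λ_dr)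
      / (λ_rs (λ_rs + λ_ds))`. -/
theorem expected_relay_power_savings_perfect_CSI {Ω : Type*} [MeasurableSpace Ω]
    (μ : Measure Ω) [IsProbabilityMeasure μ]
    (X Y Z : Ω → ℝ) (hX : Measurable X) (hY : Measurable Y) (hZ : Measurable Z)
    (lrs lds ldr : ℝ) (hlrs : 0 < lrs) (hlds : 0 < lds) (hldr : 0 < ldr)
    (hindep : iIndepFun ![X, Y, Z] μ)
    (hXlaw : μ.map X = expMeasure lrs)
    (hYlaw : μ.map Y = expMeasure lds)
    (hZlaw : μ.map Z = expMeasure ldr)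
    (Ps Pr : ℝ) (hPs : 0 < Ps) (hPr : 0 < Pr) :
    ∫ ω, Set.indicator {ω' | Y ω' < X ω' ∧ X ω' ≤ Y ω' + (Pr / Ps) * Z ω'}
        (fun ω' => Pr - ((X ω' - Y ω') / Z ω') * Ps) ω ∂μ =
      lds * ldr * (Ps * (Real.log ldr - Real.log ((Pr / Ps) * lrs + ldr))
        + Pr * lrs / ldr) / (lrs * (lrs + lds)) := by
  haveI : IsProbabilityMeasure (expMeasure lrs) := isProbabilityMeasure_expMeasure hlrs
  haveI : IsProbabilityMeasure (expMeasure lds) := isProbabilityMeasure_expMeasure hlds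
  haveI : IsProbabilityMeasure (expMeasure ldr) := isProbabilityMeasure_expMeasure hldr
  set c : ℝ := Pr / Ps with hc_def
  have hc : 0 < c := div_pos hPr hPs
  have hPc : c * Ps = Pr := div_mul_cancel₀ _ hPs.ne'
  -- the function on ℝ³
  set s3 : Set (ℝ × ℝ × ℝ) := {q | q.2.1 < q.2.2 ∧ q.2.2 ≤ q.2.1 + c * q.1} with hs3_def
  set g : ℝ × ℝ × ℝ → ℝ :=
    fun q => Set.indicator s3 (fun q => Pr - ((q.2.2 - q.2.1)/q.1) * Ps) q with hg_def
  have hs3 : MeasurableSet s3 := by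
    have m1 : Measurable (fun q : ℝ × ℝ × ℝ => q.2.1) := by fun_prop
    have m2 : Measurable (fun q : ℝ × ℝ × ℝ => q.2.2) := by fun_prop
    have m3 : Measurable (fun q : ℝ × ℝ × ℝ => q.2.1 + c * q.1) := by fun_prop
    rw [hs3_def, Set.setOf_and]
    exact (measurableSet_lt m1 m2).inter (measurableSet_le m2 m3)
  have hgmeas : Measurable g := Measurable.indicator (by fun_prop) hs3
  have hgb : ∀ q : ℝ × ℝ × ℝ, 0 ≤ g q ∧ g q ≤ Pr := by
    intro q
    by_cases hq : q ∈ s3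
    · rw [hg_def]
      simp only
      rw [Set.indicator_of_mem hq]
      obtain ⟨h1, h2⟩ := hq
      have hz : 0 < q.1 := by
        rcases le_or_gt q.1 0 with h | h
        · nlinarith
        · exact h
      have hle : (q.2.2 - q.2.1)/q.1 ≤ c := by
        rw [div_le_iff₀ hz]; linarith
      have hge : 0 ≤ (q.2.2 - q.2.1)/q.1 := by
        apply div_nonneg _ hz.le; linarith
      constructor
      · nlinarith
      · nlinarith
    · rw [hg_def]
      simp only
      rw [Set.indicator_of_notMem hq]
      exact ⟨le_refl _, hPr.le⟩
  have hgsec : ∀ z y x : ℝ, g (z,(y,x))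
      = Set.indicator (Ioc y (y + c*z)) (fun x => Pr - ((x - y)/z)*Ps) x := by
    intro z y x
    rw [hg_def, hs3_def]
    simp only [Set.indicator_apply, Set.mem_setOf_eq, Set.mem_Ioc]
  -- joint law
  have hmapT : μ.map (fun ω => (Z ω, (Y ω, X ω)))
      = (expMeasure ldr).prod ((expMeasure lds).prod (expMeasure lrs)) := by
    have hmeas' : ∀ i, Measurable (![X, Y, Z] i) := by
      intro i; fin_cases i <;> simpa
    have hYX : IndepFun Y X μ := by
      have := hindep.indepFun (i := 1) (j := 0) (by decide)
      simpa using this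
    have hZYX : IndepFun Z (fun ω => (Y ω, X ω)) μ := by
      have := hindep.indepFun_prodMk hmeas' 1 0 2 (by decide) (by decide)
      simpa using this.symm
    have hmapYX : μ.map (fun ω => (Y ω, X ω)) = (expMeasure lds).prod (expMeasure lrs) := by
      rw [(indepFun_iff_map_prod_eq_prod_map_map hY.aemeasurable hX.aemeasurable).1 hYX,
        hYlaw, hXlaw]
    rw [(indepFun_iff_map_prod_eq_prod_map_map hZ.aemeasurable
        ((hY.prodMk hX).aemeasurable)).1 hZYX, hZlaw, hmapYX]
  -- rewrite the integrand through the map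
  have hstep : (fun ω => Set.indicator {ω' | Y ω' < X ω' ∧ X ω' ≤ Y ω' + c * Z ω'}
      (fun ω' => Pr - ((X ω' - Y ω') / Z ω') * Ps) ω)
      = fun ω => g (Z ω, (Y ω, X ω)) := by
    funext ω
    rw [hg_def, hs3_def]
    simp only [Set.indicator_apply, Set.mem_setOf_eq]
  rw [hstep]
  have hT : Measurable (fun ω => (Z ω, (Y ω, X ω))) := hZ.prodMk (hY.prodMk hX)
  rw [← integral_map hT.aemeasurable hgmeas.aestronglyMeasurable, hmapT]
  -- Fubini
  have hInt : Integrable g ((expMeasure ldr).prod ((expMeasure lds).prod (expMeasure lrs))) := by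
    refine Integrable.mono' (integrable_const Pr) hgmeas.aestronglyMeasurable
      (ae_of_all _ fun q => ?_)
    rw [Real.norm_eq_abs, abs_of_nonneg (hgb q).1]; exact (hgb q).2
  have hIntz : ∀ z : ℝ, Integrable (fun q => g (z, q))
      ((expMeasure lds).prod (expMeasure lrs)) := by
    intro z
    refine Integrable.mono' (integrable_const Pr)
      ((hgmeas.comp measurable_prodMk_left).aestronglyMeasurable)
      (ae_of_all _ fun q => ?_)
    rw [Real.norm_eq_abs, abs_of_nonneg (hgb _).1]; exact (hgb _).2
  rw [integral_prod _ hInt, aux_integral_expMeasure hldr]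
  have houter : ∀ z ∈ Ioi (0:ℝ),
      (ldr * Real.exp (-(ldr*z))) * (∫ q, g (z, q) ∂((expMeasure lds).prod (expMeasure lrs)))
      = Pr * (lds/(lds+lrs)) * (ldr * Real.exp (-(ldr*z)))
        - (lds/(lds+lrs)) * (Ps*ldr/lrs) *
          ((Real.exp (-(ldr*z)) - Real.exp (-((ldr + lrs*c)*z)))/z) := by
    intro z hz
    have hz : (0:ℝ) < z := hz
    rw [integral_prod _ (hIntz z), aux_integral_expMeasure hlds]
    have hyeq : ∀ y ∈ Ioi (0:ℝ),
        (lds * Real.exp (-(lds*y))) * (∫ x, g (z,(y,x)) ∂(expMeasure lrs))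
        = (lds * Real.exp (-(lds*y))) * (Real.exp (-(lrs*y)) *
            (Pr - Ps/(lrs*z) * (1 - Real.exp (-(lrs*(c*z)))))) := by
      intro y hy
      have hy : (0:ℝ) < y := hy
      congr 1
      rw [aux_integral_expMeasure hlrs]
      calc ∫ x in Ioi (0:ℝ), (lrs * Real.exp (-(lrs*x))) * g (z,(y,x))
          = ∫ x in Ioi (0:ℝ), (lrs * Real.exp (-(lrs*x))) *
              (Set.indicator (Ioc y (y + c*z)) (fun x => Pr - ((x - y)/z)*Ps) x) := by
            simp_rw [hgsec]
        _ = _ := aux_inner hlrs hz hy hc hPc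
    rw [setIntegral_congr_fun measurableSet_Ioi hyeq, aux_middle hlds hlrs]
    have hexp2 : Real.exp (-((ldr + lrs*c)*z)) = Real.exp (-(ldr*z)) * Real.exp (-(lrs*(c*z))) := by
      rw [← Real.exp_add]; ring_nf
    rw [hexp2]
    field_simp
  rw [setIntegral_congr_fun measurableSet_Ioi houter]
  have hle2 : ldr ≤ ldr + lrs*c := by nlinarith
  have int1 : IntegrableOn (fun z => Pr * (lds/(lds+lrs)) * (ldr * Real.exp (-(ldr*z))))
      (Ioi (0:ℝ)) := ((aux_exp_integrableOn hldr).const_mul ldr).const_mul _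
  have int2 : IntegrableOn (fun z => (lds/(lds+lrs)) * (Ps*ldr/lrs) *
      ((Real.exp (-(ldr*z)) - Real.exp (-((ldr + lrs*c)*z)))/z)) (Ioi (0:ℝ)) :=
    (aux_frullani_integrable hldr hle2).const_mul _
  rw [integral_sub int1 int2, integral_const_mul, integral_const_mul, integral_const_mul,
    aux_integral_exp_rate hldr, aux_frullani hldr hle2]
  have hlog : ldr + lrs*c = c*lrs + ldr := by ring
  rw [hlog]
  field_simp
  ring
end
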